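/- arXiv:2407.18073 — 2 statements merged into one kernel-verified Lean document; each statement's English description precedes it below -/
import Mathlib

section
/- Let A be a noetherian Banach–Tate ring and M an ONable Banach A-module with ON basis (e_i)_{i∈I}. If (φ_n)_{n≥1} is a sequence of compact operators on M converging in the operator norm to a compact operator φ, then the characteristic power series converge uniformly in the coefficients: writing det(1−Xφ)=Σ_m c_mX^m and det(1−Xφ_n)=Σ_m c_m^{(n)}X^m, for every ε>0 there is N such that for all n≥N and all m≥0 one has |c_m−c_m^{(n)}|≤ε. -/
open scoped Classical

universe u v w

/-- A (non-archimedean, submultiplicative) ring norm with values in `ℝ`. -/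
structure IsRingNorm {A : Type*} [Ring A] (v : A → ℝ) : Prop where
  nonneg : ∀ a, 0 ≤ v a
  eq_zero_iff : ∀ a, v a = 0 ↔ a = 0
  map_one : v 1 = 1
  map_neg : ∀ a, v (-a) = v a
  add_le : ∀ a b, v (a + b) ≤ max (v a) (v b)
  mul_le : ∀ a b, v (a * b) ≤ v a * v b

theorem IsRingNorm.map_zero {A : Type*} [Ring A] {v : A → ℝ} (hv : IsRingNorm v) :
    v 0 = 0 := (hv.eq_zero_iff 0).mpr rfl

/-- A norm on an `A`-module, compatible with a ring norm `v` on `A`. -/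
structure IsModuleNorm {A : Type*} [Ring A] (v : A → ℝ) {M : Type*} [AddCommGroup M]
    [Module A M] (nm : M → ℝ) : Prop where
  nonneg : ∀ m, 0 ≤ nm m
  eq_zero_iff : ∀ m, nm m = 0 ↔ m = 0
  map_neg : ∀ m, nm (-m) = nm m
  add_le : ∀ m n, nm (m + n) ≤ max (nm m) (nm n)
  smul_le : ∀ (a : A) (m : M), nm (a • m) ≤ v a * nm m

/-- A sequence is Cauchy with respect to a norm. -/
def NormCauchy {M : Type*} [AddCommGroup M] (nm : M → ℝ) (s : ℕ → M) : Prop :=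
  ∀ ε : ℝ, 0 < ε → ∃ N : ℕ, ∀ i j : ℕ, N ≤ i → N ≤ j → nm (s i - s j) < ε

/-- A sequence converges to `x` with respect to a norm. -/
def NormLim {M : Type*} [AddCommGroup M] (nm : M → ℝ) (s : ℕ → M) (x : M) : Prop :=
  ∀ ε : ℝ, 0 < ε → ∃ N : ℕ, ∀ i : ℕ, N ≤ i → nm (s i - x) < ε

/-- Completeness: every Cauchy sequence converges. -/
def NormComplete {M : Type*} [AddCommGroup M] (nm : M → ℝ) : Prop :=
  ∀ s : ℕ → M, NormCauchy nm s → ∃ x : M, NormLim nm s x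

/-- Continuity of a map between modules equipped with norms. -/
def NormContinuous {M N : Type*} [AddCommGroup M] [AddCommGroup N]
    (nmM : M → ℝ) (nmN : N → ℝ) (f : M → N) : Prop :=
  ∀ m : M, ∀ ε : ℝ, 0 < ε → ∃ δ : ℝ, 0 < δ ∧
    ∀ m' : M, nmM (m' - m) < δ → nmN (f m' - f m) < ε

/-- A Banach–Tate ring: a complete normed ring containing a multiplicative
topologically nilpotent unit. -/
structure IsBanachTate {A : Type*} [Ring A] (v : A → ℝ) : Prop where
  isRingNorm : IsRingNorm v
  complete : NormComplete v
  exists_unit : ∃ ϖ : A, IsUnit ϖ ∧ v ϖ < 1 ∧ ∀ b, v (ϖ * b) = v ϖ * v b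
/-- `cA v hv I` is the Banach `A`-module `c_A(I)` of functions `I → A` tending to zero:
for every `ε > 0` only finitely many `i` satisfy `v (f i) > ε`. -/
def cA {A : Type u} [Ring A] (v : A → ℝ) (hv : IsRingNorm v) (I : Type v) :
    Submodule A (I → A) where
  carrier := {f | ∀ ε : ℝ, 0 < ε → {i : I | ε < v (f i)}.Finite}
  add_mem' := by
    intro f g hf hg ε hε
    refine ((hf ε hε).union (hg ε hε)).subset ?_
    intro i hi
    simp only [Set.mem_setOf_eq, Pi.add_apply] at hi
    simp only [Set.mem_union, Set.mem_setOf_eq]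
    by_contra hc
    push_neg at hc
    have h := le_trans (hv.add_le (f i) (g i)) (max_le hc.1 hc.2)
    exact absurd hi (not_lt.mpr h)
  zero_mem' := by
    intro ε hε
    have : {i : I | ε < v ((0 : I → A) i)} = ∅ := by
      ext i
      simp only [Set.mem_setOf_eq, Pi.zero_apply, Set.mem_empty_iff_false, iff_false, not_lt,
        hv.map_zero]
      exact le_of_lt hε
    rw [this]; exact Set.finite_empty
  smul_mem' := by
    intro a f hf ε hε
    rcases eq_or_ne a 0 with rfl | ha
    · refine Set.finite_empty.subset ?_
      intro i hi
      simp only [Set.mem_setOf_eq, Pi.smul_apply, zero_smul, hv.map_zero] at hi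
      exact absurd hi (not_lt.mpr (le_of_lt hε))
    · have hva : 0 < v a := by
        rcases lt_or_eq_of_le (hv.nonneg a) with h | h
        · exact h
        · exact absurd ((hv.eq_zero_iff a).mp h.symm) ha
      refine (hf (ε / v a) (div_pos hε hva)).subset ?_
      intro i hi
      simp only [Set.mem_setOf_eq, Pi.smul_apply, smul_eq_mul] at hi
      simp only [Set.mem_setOf_eq]
      rw [div_lt_iff₀ hva]
      calc ε < v (a * f i) := hi
        _ ≤ v a * v (f i) := hv.mul_le a (f i)
        _ = v (f i) * v a := mul_comm _ _

/-- The norm on `c_A(I)`: the supremum (= maximum) of the norms of the values. -/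
noncomputable def cNorm {A : Type u} [Ring A] (v : A → ℝ) {hv : IsRingNorm v} {I : Type v}
    (f : cA v hv I) : ℝ :=
  ⨆ i : I, v ((f : I → A) i)

/-- The canonical `i`-th basis vector `e_i` of `c_A(I)`. -/
noncomputable def stdDelta {A : Type u} [Ring A] (v : A → ℝ) (hv : IsRingNorm v) {I : Type v} (i : I) :
    cA v hv I :=
  ⟨fun j => if j = i then 1 else 0, by
    intro ε hε
    refine (Set.finite_singleton i).subset ?_
    intro j hj
    simp only [Set.mem_setOf_eq] at hj
    simp only [Set.mem_singleton_iff]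
    by_contra hji
    rw [if_neg hji, hv.map_zero] at hj
    exact absurd hj (not_lt.mpr (le_of_lt hε))⟩
/-- A linear map has finite rank if its image is contained in a finitely generated
submodule of the target. -/
def FiniteRank {A : Type u} [Ring A] {M : Type v} {N : Type w} [AddCommGroup M] [Module A M]
    [AddCommGroup N] [Module A N] (f : M →ₗ[A] N) : Prop :=
  ∃ P : Submodule A N, P.FG ∧ LinearMap.range f ≤ P

/-- A continuous linear map is compact if it is a limit, in the operator norm, of
continuous finite rank maps. -/
def IsCompactOp {A : Type u} [Ring A] {M : Type v} {N : Type w} [AddCommGroup M] [Module A M]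
    [AddCommGroup N] [Module A N] (nmM : M → ℝ) (nmN : N → ℝ) (f : M →ₗ[A] N) : Prop :=
  NormContinuous nmM nmN f ∧
  ∀ ε : ℝ, 0 < ε → ∃ g : M →ₗ[A] N, NormContinuous nmM nmN g ∧ FiniteRank g ∧
    ∀ m : M, nmN (f m - g m) ≤ ε * nmM m

/-- The matrix coefficients `a_{i,j}` of a linear map `f : M → N`, with respect to
ON bases of `M` and `N` given by isomorphisms with `c_A(I)` and `c_A(J)`:
`f(e_i) = Σ_j a_{i,j} f_j`. -/
noncomputable def matrixCoef {A : Type u} [Ring A] (v : A → ℝ) (hv : IsRingNorm v)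
    {I : Type v} {J : Type v} {M N : Type v} [AddCommGroup M] [Module A M]
    [AddCommGroup N] [Module A N]
    (TM : M ≃ₗ[A] cA v hv I) (TN : N ≃ₗ[A] cA v hv J)
    (f : M →ₗ[A] N) (i : I) (j : J) : A :=
  ((TN (f (TM.symm (stdDelta v hv i))) : cA v hv J) : J → A) j

/-- The projection of `c_A(I)` onto the coordinates in a finite set `S`. -/
noncomputable def projCA {A : Type u} [Ring A] (v : A → ℝ) (hv : IsRingNorm v) {I : Type v}
    (S : Finset I) : cA v hv I →ₗ[A] cA v hv I where
  toFun f := ⟨fun i => if i ∈ S then (f : I → A) i else 0, by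
    intro ε hε
    refine (f.2 ε hε).subset ?_
    intro i hi
    simp only [Set.mem_setOf_eq] at hi ⊢
    by_cases h : i ∈ S
    · rwa [if_pos h] at hi
    · rw [if_neg h, hv.map_zero] at hi
      exact absurd hi (not_lt.mpr (le_of_lt hε))⟩
  map_add' f g := by
    apply Subtype.ext
    funext i
    by_cases h : i ∈ S <;> simp [h]
  map_smul' a f := by
    apply Subtype.ext
    funext i
    by_cases h : i ∈ S <;> simp [h]

/-- The projection `π_S : M → M` of an ONable Banach module onto the span of the
basis vectors indexed by a finite set `S`. -/
noncomputable def projON {A : Type u} [Ring A] (v : A → ℝ) (hv : IsRingNorm v)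
    {I : Type v} {M : Type v} [AddCommGroup M] [Module A M]
    (T : M ≃ₗ[A] cA v hv I) (S : Finset I) : M →ₗ[A] M :=
  T.symm.toLinearMap ∘ₗ projCA v hv S ∘ₗ T.toLinearMap
/-- Unconditional summability of a family in `A` with respect to the norm `v`:
the finite partial sums converge to `x` along the filter of finite subsets. -/
def HasNormSum {A : Type u} [Ring A] (v : A → ℝ) {ι : Type*} (g : ι → A) (x : A) : Prop :=
  ∀ ε : ℝ, 0 < ε → ∃ s : Finset ι, ∀ t : Finset ι, s ⊆ t → v ((∑ i ∈ t, g i) - x) < ε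

/-- For a matrix `(a_{i,j})_{i,j ∈ I}` and a finite subset `S ⊆ I`, the sum
`c_S = Σ_{σ : S → S} sgn(σ) Π_{i ∈ S} a_{i,σ(i)}` over all permutations of `S`. -/
noncomputable def detSubset {A : Type u} [CommRing A] {I : Type v} (a : I → I → A)
    (S : Finset I) : A :=
  ∑ σ : Equiv.Perm {x : I // x ∈ S},
    ((Equiv.Perm.sign σ : ℤ) : A) * ∏ i : {x : I // x ∈ S}, a i.1 (σ i).1

/-- `c : ℕ → A` is the sequence of coefficients of the characteristic power series
`det(1 - Xφ) = Σ_n c_n X^n` of an operator with matrix `(a_{i,j})`: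
`c_n = (-1)^n Σ_{S ⊆ I, |S| = n} c_S`, the sum converging with respect to `v`. -/
noncomputable def IsCharSeries {A : Type u} [CommRing A] (v : A → ℝ) {I : Type v}
    (a : I → I → A) (c : ℕ → A) : Prop :=
  ∀ n : ℕ, HasNormSum v
    (fun S : {S : Finset I // S.card = n} => (-1 : A) ^ n * detSubset a S.1) (c n)


section CharAux

open Finset

variable {A : Type u} [CommRing A] {v : A → ℝ}

theorem CharAux.v_sub_le (hv : IsRingNorm v) (a b : A) : v (a - b) ≤ max (v a) (v b) := by
  have h := hv.add_le a (-b)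
  rw [hv.map_neg] at h
  simpa [sub_eq_add_neg] using h

theorem CharAux.v_sum_le (hv : IsRingNorm v) {ι : Type*} {s : Finset ι} {F : ι → A} {B : ℝ}
    (hB : 0 ≤ B) (h : ∀ i ∈ s, v (F i) ≤ B) : v (∑ i ∈ s, F i) ≤ B := by
  classical
  induction s using Finset.induction_on with
  | empty => simpa [hv.map_zero] using hB
  | @insert a s ha ih =>
    rw [Finset.sum_insert ha]
    exact le_trans (hv.add_le _ _) (max_le (h _ (Finset.mem_insert_self _ _))
      (ih fun i hi => h i (Finset.mem_insert_of_mem hi)))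

theorem CharAux.v_prod_le (hv : IsRingNorm v) {ι : Type*} {s : Finset ι} {F : ι → A} {G : ι → ℝ}
    (hG : ∀ i ∈ s, 0 ≤ G i) (h : ∀ i ∈ s, v (F i) ≤ G i) :
    v (∏ i ∈ s, F i) ≤ ∏ i ∈ s, G i := by
  classical
  induction s using Finset.induction_on with
  | empty => simp [hv.map_one]
  | @insert a s ha ih =>
    rw [Finset.prod_insert ha, Finset.prod_insert ha]
    exact le_trans (hv.mul_le _ _) (mul_le_mul (h _ (Finset.mem_insert_self _ _))
      (ih (fun i hi => hG i (Finset.mem_insert_of_mem hi))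
        (fun i hi => h i (Finset.mem_insert_of_mem hi)))
      (hv.nonneg _) (hG _ (Finset.mem_insert_self _ _)))

theorem CharAux.v_sign_mul (hv : IsRingNorm v) (u : ℤˣ) (x : A) :
    v (((u : ℤ) : A) * x) = v x := by
  rcases Int.units_eq_one_or u with h | h <;> subst h
  · simp
  · push_cast
    rw [neg_one_mul, hv.map_neg]

theorem CharAux.v_neg_one_pow_mul (hv : IsRingNorm v) (m : ℕ) (x : A) :
    v ((-1 : A) ^ m * x) = v x := by
  induction m with
  | zero => simp
  | succ m ih =>
    have h : (-1 : A) ^ (m + 1) * x = -((-1 : A) ^ m * x) := by ring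
    rw [h, hv.map_neg, ih]

theorem CharAux.hasNormSum_sub {ι : Type*} {f g : ι → A} {x y : A} (hv : IsRingNorm v)
    (hf : HasNormSum v f x) (hg : HasNormSum v g y) :
    HasNormSum v (fun i => f i - g i) (x - y) := by
  intro ε hε
  obtain ⟨s₁, hs₁⟩ := hf ε hε
  obtain ⟨s₂, hs₂⟩ := hg ε hε
  refine ⟨s₁ ∪ s₂, fun t ht => ?_⟩
  have h1 := hs₁ t (Finset.subset_union_left.trans ht)
  have h2 := hs₂ t (Finset.subset_union_right.trans ht)
  have heq : (∑ i ∈ t, (f i - g i)) - (x - y)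
      = ((∑ i ∈ t, f i) - x) - ((∑ i ∈ t, g i) - y) := by
    rw [Finset.sum_sub_distrib]; ring
  rw [heq]
  exact lt_of_le_of_lt (CharAux.v_sub_le hv _ _) (max_lt h1 h2)

theorem CharAux.hasNormSum_le {ι : Type*} {f : ι → A} {x : A} (hv : IsRingNorm v)
    (hf : HasNormSum v f x) {B : ℝ} (hB : 0 ≤ B) (h : ∀ i, v (f i) ≤ B) : v x ≤ B := by
  have key : ∀ ε : ℝ, 0 < ε → v x ≤ B + ε := by
    intro ε hε
    obtain ⟨s, hs⟩ := hf ε hε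
    have h1 := hs s (Finset.Subset.refl s)
    have hx : v x ≤ max (v (x - ∑ i ∈ s, f i)) (v (∑ i ∈ s, f i)) := by
      have heq : (x - ∑ i ∈ s, f i) + ∑ i ∈ s, f i = x := by ring
      calc v x = v ((x - ∑ i ∈ s, f i) + ∑ i ∈ s, f i) := by rw [heq]
        _ ≤ _ := hv.add_le _ _
    have h2 : v (x - ∑ i ∈ s, f i) ≤ ε := by
      rw [← hv.map_neg, neg_sub]; exact le_of_lt h1
    have h3 : v (∑ i ∈ s, f i) ≤ B := CharAux.v_sum_le hv hB (fun i _ => h i)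
    exact hx.trans (max_le (h2.trans (by linarith)) (h3.trans (by linarith)))
  by_contra hc
  push_neg at hc
  have := key ((v x - B) / 2) (by linarith)
  linarith

theorem CharAux.cNorm_bddAbove (hv : IsRingNorm v) {I : Type*} (f : cA v hv I) :
    BddAbove (Set.range fun j : I => v ((f : I → A) j)) := by
  have hfin : {i : I | 1 < v ((f : I → A) i)}.Finite := f.2 1 one_pos
  obtain ⟨B, hB⟩ := (hfin.image fun j => v ((f : I → A) j)).bddAbove
  refine ⟨max B 1, ?_⟩
  rintro x ⟨j, rfl⟩
  by_cases hj : 1 < v ((f : I → A) j)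
  · exact le_max_of_le_left (hB (Set.mem_image_of_mem _ hj))
  · exact le_max_of_le_right (not_lt.mp hj)

theorem CharAux.le_cNorm (hv : IsRingNorm v) {I : Type*} (f : cA v hv I) (j : I) :
    v ((f : I → A) j) ≤ cNorm v f :=
  le_ciSup (CharAux.cNorm_bddAbove hv f) j

theorem CharAux.cNorm_le (hv : IsRingNorm v) {I : Type*} (f : cA v hv I) {B : ℝ}
    (hB : 0 ≤ B) (h : ∀ j, v ((f : I → A) j) ≤ B) : cNorm v f ≤ B :=
  Real.iSup_le h hB

theorem CharAux.cNorm_stdDelta (hv : IsRingNorm v) {I : Type*} (i : I) :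
    cNorm v (stdDelta v hv i) = 1 := by
  refine le_antisymm (CharAux.cNorm_le hv _ zero_le_one fun j => ?_) ?_
  · show v (if j = i then (1 : A) else 0) ≤ 1
    split_ifs
    · exact le_of_eq hv.map_one
    · rw [hv.map_zero]; exact zero_le_one
  · have h := CharAux.le_cNorm hv (stdDelta v hv i) i
    simpa [stdDelta, hv.map_one] using h

theorem CharAux.exists_unit_ball_bound {M : Type*} [AddCommGroup M] [Module A M]
    (hA : IsBanachTate v) {nm : M → ℝ} (hnm : IsModuleNorm v nm)
    (f : M →ₗ[A] M) (hf : NormContinuous nm nm f) :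
    ∃ C : ℝ, 1 ≤ C ∧ ∀ x : M, nm x ≤ 1 → nm (f x) ≤ C := by
  obtain ⟨q, hu, hlt, hmul⟩ := hA.exists_unit
  have hv := hA.isRingNorm
  have hq0 : 0 < v q := by
    rcases (hv.nonneg q).lt_or_eq with h | h
    · exact h
    · exfalso
      have hqz : q = 0 := (hv.eq_zero_iff q).mp h.symm
      rw [hqz] at hu
      have h01 : (0 : A) = 1 := isUnit_zero_iff.mp hu
      have h2 := hv.map_one
      rw [← h01, hv.map_zero] at h2
      norm_num at h2
  obtain ⟨δ, hδ0, hδ⟩ := hf 0 1 one_pos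
  obtain ⟨k, hk⟩ := exists_pow_lt_of_lt_one hδ0 hlt
  have hpow : ∀ nn : ℕ, v (q ^ nn) = v q ^ nn := by
    intro nn; induction nn with
    | zero => simpa using hv.map_one
    | succ nn ih => rw [pow_succ', hmul (q ^ nn), ih, ← pow_succ']
  set u := hu.unit with hudef
  have huv : (u : A) = q := hu.unit_spec
  have hvinv : v ((u⁻¹ : Aˣ) : A) = (v q)⁻¹ := by
    have h1 : q * ((u⁻¹ : Aˣ) : A) = 1 := by rw [← huv]; exact u.mul_inv
    have h2 : v q * v ((u⁻¹ : Aˣ) : A) = 1 := by rw [← hmul, h1, hv.map_one]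
    exact (inv_eq_of_mul_eq_one_right h2).symm
  have hvpow : ∀ (y : A) (nn : ℕ), v (y ^ nn) ≤ v y ^ nn := by
    intro y nn; induction nn with
    | zero => simpa using le_of_eq hv.map_one
    | succ nn ih =>
      rw [pow_succ', pow_succ']
      exact le_trans (hv.mul_le _ _) (mul_le_mul_of_nonneg_left ih (hv.nonneg y))
  have hvinvpow : v (((u⁻¹ : Aˣ) : A) ^ k) ≤ (v q)⁻¹ ^ k := by
    rw [← hvinv]; exact hvpow _ k
  refine ⟨max ((v q)⁻¹ ^ k) 1, le_max_right _ _, fun x hx => ?_⟩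
  have h2 : nm (q ^ k • x - 0) < δ := by
    rw [sub_zero]
    calc nm (q ^ k • x) ≤ v (q ^ k) * nm x := hnm.smul_le _ _
      _ ≤ v (q ^ k) * 1 := mul_le_mul_of_nonneg_left hx (hv.nonneg _)
      _ = v q ^ k := by rw [mul_one, hpow]
      _ < δ := hk
  have h3 := hδ _ h2
  rw [map_zero, sub_zero, map_smul] at h3
  have h4 : f x = ((u⁻¹ : Aˣ) : A) ^ k • q ^ k • f x := by
    rw [smul_smul, ← mul_pow, ← huv, u.inv_mul, one_pow, one_smul]
  have h5 : nm (f x) ≤ (v q)⁻¹ ^ k := by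
    calc nm (f x) = nm (((u⁻¹ : Aˣ) : A) ^ k • q ^ k • f x) := by rw [← h4]
      _ ≤ v (((u⁻¹ : Aˣ) : A) ^ k) * nm (q ^ k • f x) := hnm.smul_le _ _
      _ ≤ (v q)⁻¹ ^ k * 1 := by
          refine mul_le_mul hvinvpow (le_of_lt h3) (hnm.nonneg _) ?_
          positivity
      _ = (v q)⁻¹ ^ k := mul_one _
  exact h5.trans (le_max_left _ _)

theorem CharAux.nm_basis {I M : Type v} [AddCommGroup M] [Module A M] (hv : IsRingNorm v)
    {nm : M → ℝ} (T : M ≃ₗ[A] cA v hv I) (hT : ∀ m : M, nm m = cNorm v (T m)) (i : I) :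
    nm (T.symm (stdDelta v hv i)) = 1 := by
  rw [hT, LinearEquiv.apply_symm_apply, CharAux.cNorm_stdDelta hv]

theorem CharAux.matrixCoef_le {I M : Type v} [AddCommGroup M] [Module A M] (hv : IsRingNorm v)
    {nm : M → ℝ} (T : M ≃ₗ[A] cA v hv I) (hT : ∀ m : M, nm m = cNorm v (T m))
    (f : M →ₗ[A] M) (i : I) (j : I) :
    v (matrixCoef v hv T T f i j) ≤ nm (f (T.symm (stdDelta v hv i))) := by
  rw [hT]
  exact CharAux.le_cNorm hv _ j

theorem CharAux.matrixCoef_sub {I M : Type v} [AddCommGroup M] [Module A M] (hv : IsRingNorm v)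
    (T : M ≃ₗ[A] cA v hv I) (f g : M →ₗ[A] M) (i : I) (j : I) :
    matrixCoef v hv T T (f - g) i j = matrixCoef v hv T T f i j - matrixCoef v hv T T g i j := by
  simp [matrixCoef, LinearMap.sub_apply, map_sub]

theorem CharAux.matrixCoef_row {I M : Type v} [AddCommGroup M] [Module A M] (hv : IsRingNorm v)
    (T : M ≃ₗ[A] cA v hv I) (g : M →ₗ[A] M) (gens : Finset M)
    (hrange : LinearMap.range g ≤ Submodule.span A (↑gens : Set M)) (i : I) :
    ∃ β : M → A, ∀ j, matrixCoef v hv T T g i j =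
      ∑ p ∈ gens, β p * ((T p : I → A) j) := by
  have hmem : g (T.symm (stdDelta v hv i)) ∈ Submodule.span A (↑gens : Set M) :=
    hrange (LinearMap.mem_range_self g _)
  obtain ⟨β, -, hβ⟩ := Submodule.mem_span_finset.mp hmem
  refine ⟨β, fun j => ?_⟩
  unfold matrixCoef
  rw [← hβ, map_sum]
  have hcoe : ((∑ p ∈ gens, T (β p • p) : cA v hv I) : I → A) j
      = ∑ p ∈ gens, ((T (β p • p) : I → A)) j := by
    rw [AddSubmonoidClass.coe_finset_sum, Finset.sum_apply]
  rw [hcoe]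
  refine Finset.sum_congr rfl fun p _ => ?_
  rw [map_smul]
  rfl

theorem CharAux.det_row_formula {n : Type*} [Fintype n] [DecidableEq n] (M : Matrix n n A) :
    M.det = ∑ σ : Equiv.Perm n, ((Equiv.Perm.sign σ : ℤ) : A) * ∏ i, M i (σ i) := by
  rw [← Matrix.det_transpose, Matrix.det_apply']
  rfl

theorem CharAux.detSubset_eq_det {I : Type*} (a : I → I → A) (S : Finset I) :
    detSubset a S = Matrix.det (Matrix.of fun i j : {x : I // x ∈ S} => a i.1 j.1) := by
  rw [CharAux.det_row_formula]
  rfl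

theorem CharAux.v_det_le (hv : IsRingNorm v) {n : Type*} [Fintype n] [DecidableEq n]
    (M : Matrix n n A) (B : n → ℝ) (hB : ∀ i, 0 ≤ B i) (h : ∀ i j, v (M i j) ≤ B i) :
    v M.det ≤ ∏ i, B i := by
  rw [CharAux.det_row_formula]
  refine CharAux.v_sum_le hv (Finset.prod_nonneg fun i _ => hB i) fun σ _ => ?_
  rw [CharAux.v_sign_mul hv]
  exact CharAux.v_prod_le hv (fun i _ => hB i) (fun i _ => h i (σ i))

theorem CharAux.det_add_expansion {n : Type*} [Fintype n] [DecidableEq n]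
    (Mg Mh : Matrix n n A) :
    (Mg + Mh).det =
      ∑ T : Finset n, Matrix.det (Matrix.of fun i j => if i ∈ T then Mg i j else Mh i j) := by
  have h2 : ∀ (σ : Equiv.Perm n) (T : Finset n),
      (∏ i ∈ T, Mg i (σ i)) * ∏ i ∈ (Finset.univ \ T), Mh i (σ i)
        = ∏ i, (if i ∈ T then Mg i (σ i) else Mh i (σ i)) := by
    intro σ T
    rw [← Finset.prod_mul_prod_compl T (fun i => if i ∈ T then Mg i (σ i) else Mh i (σ i)),
      Finset.compl_eq_univ_sdiff]
    congr 1
    · exact Finset.prod_congr rfl fun i hi => (if_pos hi).symm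
    · exact Finset.prod_congr rfl fun i hi =>
        (if_neg (Finset.mem_sdiff.mp hi).2).symm
  calc (Mg + Mh).det
      = ∑ σ : Equiv.Perm n, ((Equiv.Perm.sign σ : ℤ) : A) * ∏ i, (Mg + Mh) i (σ i) :=
        CharAux.det_row_formula _
    _ = ∑ σ : Equiv.Perm n, ∑ T : Finset n,
          ((Equiv.Perm.sign σ : ℤ) : A) * ∏ i, (if i ∈ T then Mg i (σ i) else Mh i (σ i)) := by
        refine Finset.sum_congr rfl fun σ _ => ?_
        rw [← Finset.mul_sum]
        congr 1
        have hadd : ∀ i, (Mg + Mh) i (σ i) = Mg i (σ i) + Mh i (σ i) := fun i => rfl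
        calc ∏ i, (Mg + Mh) i (σ i) = ∏ i, (Mg i (σ i) + Mh i (σ i)) := by
              exact Finset.prod_congr rfl fun i _ => hadd i
          _ = ∑ T ∈ (Finset.univ : Finset n).powerset,
                (∏ i ∈ T, Mg i (σ i)) * ∏ i ∈ (Finset.univ \ T), Mh i (σ i) :=
              Finset.prod_add _ _ _
          _ = ∑ T : Finset n, ∏ i, (if i ∈ T then Mg i (σ i) else Mh i (σ i)) := by
              rw [Finset.powerset_univ]
              exact Finset.sum_congr rfl fun T _ => h2 σ T
    _ = ∑ T : Finset n, ∑ σ : Equiv.Perm n,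
          ((Equiv.Perm.sign σ : ℤ) : A) * ∏ i, (if i ∈ T then Mg i (σ i) else Mh i (σ i)) :=
        Finset.sum_comm
    _ = ∑ T : Finset n, Matrix.det (Matrix.of fun i j => if i ∈ T then Mg i j else Mh i j) := by
        refine Finset.sum_congr rfl fun T _ => ?_
        exact (CharAux.det_row_formula (n := n)
          (Matrix.of fun i j => if i ∈ T then Mg i j else Mh i j)).symm

theorem CharAux.det_rows_spanned_eq_zero {n : Type*} [Fintype n] [DecidableEq n]
    {κ : Type*} [Fintype κ] [DecidableEq κ] [DecidableEq (n → A)] [DecidableEq (κ ⊕ n)]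
    (M : Matrix n n A) (T : Finset n)
    (q : κ → n → A) (β : n → κ → A)
    (hrow : ∀ i ∈ T, (M i) = ∑ k : κ, β i k • q k)
    (hcard : Fintype.card κ < T.card) : M.det = 0 := by
  classical
  set g : n → κ ⊕ n → (n → A) :=
    fun i s => Sum.elim (fun k => β i k • q k) (fun _ => M i) s with hg
  set t : n → Finset (κ ⊕ n) := fun i =>
    if i ∈ T then Finset.univ.image Sum.inl else {Sum.inr i} with ht
  have hM : M = fun i => ∑ j ∈ t i, g i j := by
    funext i
    by_cases hi : i ∈ T
    · rw [show t i = Finset.univ.image Sum.inl from by rw [ht]; exact if_pos hi,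
        Finset.sum_image (fun x _ y _ h => Sum.inl_injective h)]
      exact hrow i hi
    · rw [show t i = {Sum.inr i} from by rw [ht]; exact if_neg hi, Finset.sum_singleton]
      rfl
  have hdet : M.det = (Matrix.detRowAlternating :
      (n → A) [⋀^n]→ₗ[A] A).toMultilinearMap M := rfl
  rw [hdet]
  conv_lhs => rw [hM]
  rw [MultilinearMap.map_sum_finset]
  refine Finset.sum_eq_zero fun p hp => ?_
  have hmem : ∀ i, p i ∈ t i := fun i => Fintype.mem_piFinset.mp hp i
  set c : n → A := fun i => Sum.elim (fun k => β i k) (fun _ => (1 : A)) (p i) with hc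
  set b : n → (n → A) := fun i => Sum.elim (fun k => q k) (fun _ => M i) (p i) with hb
  have hgb : (fun i => g i (p i)) = fun i => c i • b i := by
    funext i
    rcases hpi : p i with k | i'
    · simp [hg, hc, hb, hpi]
    · simp [hg, hc, hb, hpi]
  rw [hgb, MultilinearMap.map_smul_univ]
  have hbmem : ∀ i ∈ T, b i ∈ Finset.univ.image q := by
    intro i hi
    have hmi := hmem i
    rw [show t i = Finset.univ.image Sum.inl from by rw [ht]; exact if_pos hi] at hmi
    obtain ⟨k, _, hk⟩ := Finset.mem_image.mp hmi
    have hbk : b i = q k := by rw [hb]; simp only [← hk]; rfl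
    rw [hbk]
    exact Finset.mem_image_of_mem q (Finset.mem_univ k)
  have hkey : Finset.card (Finset.univ.image q) < T.card :=
    lt_of_le_of_lt (le_trans Finset.card_image_le (le_of_eq (Finset.card_univ))) hcard
  obtain ⟨i, hiT, i', hi'T, hne, heq⟩ :=
    Finset.exists_ne_map_eq_of_card_lt_of_maps_to hkey hbmem
  have hzero : (Matrix.detRowAlternating : (n → A) [⋀^n]→ₗ[A] A).toMultilinearMap b = 0 :=
    (Matrix.detRowAlternating : (n → A) [⋀^n]→ₗ[A] A).map_eq_zero_of_eq b heq hne
  rw [hzero, smul_zero]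

theorem CharAux.v_detSubset_le (hv : IsRingNorm v) {I : Type*} {κ : Type*} [Fintype κ]
    (a G H : I → I → A) (hadd : ∀ i j, a i j = G i j + H i j)
    (q : κ → I → A) (β : I → κ → A) (hspan : ∀ i j, G i j = ∑ k : κ, β i k * q k j)
    {Cg η : ℝ} (hCg : 1 ≤ Cg) (hη0 : 0 ≤ η) (hη1 : η ≤ 1)
    (hGb : ∀ i j, v (G i j) ≤ Cg) (hHb : ∀ i j, v (H i j) ≤ η)
    (S : Finset I) (hcard : Fintype.card κ ≤ S.card) :
    v (detSubset a S) ≤ η ^ (S.card - Fintype.card κ) * Cg ^ Fintype.card κ := by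
  classical
  have hCg0 : (0 : ℝ) ≤ Cg := zero_le_one.trans hCg
  have hB0 : 0 ≤ η ^ (S.card - Fintype.card κ) * Cg ^ Fintype.card κ :=
    mul_nonneg (pow_nonneg hη0 _) (pow_nonneg hCg0 _)
  rw [CharAux.detSubset_eq_det]
  have hsplit : (Matrix.of fun i j : {x : I // x ∈ S} => a i.1 j.1)
      = (Matrix.of fun i j : {x : I // x ∈ S} => G i.1 j.1)
        + (Matrix.of fun i j : {x : I // x ∈ S} => H i.1 j.1) := by
    ext i j
    exact hadd i.1 j.1
  rw [hsplit, CharAux.det_add_expansion]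
  refine CharAux.v_sum_le hv hB0 fun T _ => ?_
  have hTcard : T.card ≤ S.card := by
    have h := Finset.card_le_univ T
    rwa [Fintype.card_coe] at h
  by_cases hT : T.card ≤ Fintype.card κ
  · refine le_trans (CharAux.v_det_le hv _ (fun i => if i ∈ T then Cg else η)
      (fun i => by show (0 : ℝ) ≤ if i ∈ T then Cg else η; split_ifs; exacts [hCg0, hη0])
      (fun i j => by
        by_cases hmem : i ∈ T
        · simp only [Matrix.of_apply, if_pos hmem]
          exact hGb i.1 j.1
        · simp only [Matrix.of_apply, if_neg hmem]
          exact hHb i.1 j.1)) ?_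
    have hprod : (∏ i : {x // x ∈ S}, (if i ∈ T then Cg else η))
        = Cg ^ T.card * η ^ (S.card - T.card) := by
      rw [← Finset.prod_mul_prod_compl T (fun i => if i ∈ T then Cg else η)]
      rw [Finset.prod_congr rfl (fun i hi => if_pos hi),
        Finset.prod_congr rfl (fun (i : {x // x ∈ S}) (hi : i ∈ Tᶜ) =>
          if_neg (Finset.mem_compl.mp hi)),
        Finset.prod_const, Finset.prod_const, Finset.card_compl, Fintype.card_coe]
    rw [hprod]
    have h1 : Cg ^ T.card ≤ Cg ^ Fintype.card κ := pow_le_pow_right₀ hCg hT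
    have h2 : η ^ (S.card - T.card) ≤ η ^ (S.card - Fintype.card κ) :=
      pow_le_pow_of_le_one hη0 hη1 (Nat.sub_le_sub_left hT S.card)
    calc Cg ^ T.card * η ^ (S.card - T.card)
        ≤ Cg ^ Fintype.card κ * η ^ (S.card - Fintype.card κ) :=
          mul_le_mul h1 h2 (pow_nonneg hη0 _) (pow_nonneg hCg0 _)
      _ = η ^ (S.card - Fintype.card κ) * Cg ^ Fintype.card κ := mul_comm _ _
  · push_neg at hT
    have hzero : (Matrix.of fun i j : {x // x ∈ S} =>
        if i ∈ T then (Matrix.of fun i j : {x : I // x ∈ S} => G i.1 j.1) i j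
        else (Matrix.of fun i j : {x : I // x ∈ S} => H i.1 j.1) i j).det = 0 := by
      refine CharAux.det_rows_spanned_eq_zero _ T (fun k => fun j : {x // x ∈ S} => q k j.1)
        (fun i k => β i.1 k) (fun i hi => ?_) hT
      funext j
      simp only [Matrix.of_apply, if_pos hi]
      rw [hspan i.1 j.1]
      rw [Finset.sum_apply]
      exact Finset.sum_congr rfl fun k _ => rfl
    rw [hzero, hv.map_zero]
    exact hB0

theorem CharAux.v_detSubset_sub_le (hv : IsRingNorm v) {I : Type*}
    (a b : I → I → A) {C δ : ℝ} (hC : 1 ≤ C) (hδ0 : 0 ≤ δ) (hδC : δ ≤ C)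
    (hab : ∀ i j, v (a i j - b i j) ≤ δ) (hbb : ∀ i j, v (b i j) ≤ C)
    (S : Finset I) : v (detSubset a S - detSubset b S) ≤ δ * C ^ (S.card - 1) := by
  classical
  have hC0 : (0 : ℝ) ≤ C := zero_le_one.trans hC
  have hB0 : 0 ≤ δ * C ^ (S.card - 1) := mul_nonneg hδ0 (pow_nonneg hC0 _)
  have hsplit : (Matrix.of fun i j : {x : I // x ∈ S} => a i.1 j.1)
      = (Matrix.of fun i j : {x : I // x ∈ S} => a i.1 j.1 - b i.1 j.1)
        + (Matrix.of fun i j : {x : I // x ∈ S} => b i.1 j.1) := by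
    ext i j
    simp
  rw [CharAux.detSubset_eq_det a, CharAux.detSubset_eq_det b, hsplit,
    CharAux.det_add_expansion]
  rw [← Finset.add_sum_erase _ _ (Finset.mem_univ (∅ : Finset {x : I // x ∈ S}))]
  have hempty : (Matrix.of fun i j : {x : I // x ∈ S} =>
      if i ∈ (∅ : Finset {x : I // x ∈ S})
      then (Matrix.of fun i j : {x : I // x ∈ S} => a i.1 j.1 - b i.1 j.1) i j
      else (Matrix.of fun i j : {x : I // x ∈ S} => b i.1 j.1) i j).det
      = (Matrix.of fun i j : {x : I // x ∈ S} => b i.1 j.1).det := by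
    have harg : (Matrix.of fun i j : {x : I // x ∈ S} =>
        if i ∈ (∅ : Finset {x : I // x ∈ S})
        then (Matrix.of fun i j : {x : I // x ∈ S} => a i.1 j.1 - b i.1 j.1) i j
        else (Matrix.of fun i j : {x : I // x ∈ S} => b i.1 j.1) i j)
        = (Matrix.of fun i j : {x : I // x ∈ S} => b i.1 j.1) := by
      ext i j
      simp
    rw [harg]
  rw [hempty, add_sub_cancel_left]
  refine CharAux.v_sum_le hv hB0 fun T hT => ?_
  have hTne : T ≠ ∅ := (Finset.mem_erase.mp hT).1
  have hT1 : 1 ≤ T.card := Finset.card_pos.mpr (Finset.nonempty_iff_ne_empty.mpr hTne)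
  have hTcard : T.card ≤ S.card := by
    have h := Finset.card_le_univ T
    rwa [Fintype.card_coe] at h
  refine le_trans (CharAux.v_det_le hv _ (fun i => if i ∈ T then δ else C)
    (fun i => by show (0 : ℝ) ≤ if i ∈ T then δ else C; split_ifs; exacts [hδ0, hC0])
    (fun i j => by
      by_cases hmem : i ∈ T
      · simp only [Matrix.of_apply, if_pos hmem]
        exact hab i.1 j.1
      · simp only [Matrix.of_apply, if_neg hmem]
        exact hbb i.1 j.1)) ?_
  have hprod : (∏ i : {x : I // x ∈ S}, (if i ∈ T then δ else C))
      = δ ^ T.card * C ^ (S.card - T.card) := by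
    rw [← Finset.prod_mul_prod_compl T (fun i => if i ∈ T then δ else C)]
    rw [Finset.prod_congr rfl (fun i hi => if_pos hi),
      Finset.prod_congr rfl (fun (i : {x : I // x ∈ S}) (hi : i ∈ Tᶜ) =>
        if_neg (Finset.mem_compl.mp hi)),
      Finset.prod_const, Finset.prod_const, Finset.card_compl, Fintype.card_coe]
  rw [hprod]
  have hTeq : T.card = (T.card - 1) + 1 := (Nat.succ_pred_eq_of_pos hT1).symm
  have hpow : δ ^ T.card = δ * δ ^ (T.card - 1) := by
    conv_lhs => rw [hTeq]
    rw [pow_succ']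
  calc δ ^ T.card * C ^ (S.card - T.card)
      = δ * (δ ^ (T.card - 1) * C ^ (S.card - T.card)) := by
        rw [hpow]; ring
    _ ≤ δ * (C ^ (T.card - 1) * C ^ (S.card - T.card)) := by
        refine mul_le_mul_of_nonneg_left ?_ hδ0
        exact mul_le_mul_of_nonneg_right (pow_le_pow_left₀ hδ0 hδC _)
          (pow_nonneg hC0 _)
    _ = δ * C ^ (S.card - 1) := by
        rw [← pow_add]
        have hexp : T.card - 1 + (S.card - T.card) = S.card - 1 := by omega
        rw [hexp]

end CharAux

/-- If a sequence of compact operators `φ_n` on an ONable Banach module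
over a noetherian Banach–Tate ring converges, in the operator norm, to a compact
operator `φ`, then the characteristic power series `det(1 - Xφ_n)` converge to
`det(1 - Xφ)` uniformly in the coefficients. -/
theorem charSeries_tendsto_of_tendsto
    {A : Type u} [CommRing A] (v : A → ℝ) (hA : IsBanachTate v)
    (hnoeth : IsNoetherianRing A)
    {M : Type u} [AddCommGroup M] [Module A M] (nm : M → ℝ)
    (hnm : IsModuleNorm v nm) (hcomp : NormComplete nm)
    {I : Type u} (T : M ≃ₗ[A] cA v hA.isRingNorm I)
    (hT : ∀ m : M, nm m = cNorm v (T m))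
    (φseq : ℕ → (M →ₗ[A] M)) (hφseq : ∀ n, IsCompactOp nm nm (φseq n))
    (φ : M →ₗ[A] M) (hφ : IsCompactOp nm nm φ)
    (hconv : ∀ ε : ℝ, 0 < ε → ∃ N : ℕ, ∀ n : ℕ, N ≤ n →
      ∀ m : M, nm (φseq n m - φ m) ≤ ε * nm m)
    (c : ℕ → A) (hc : IsCharSeries v (matrixCoef v hA.isRingNorm T T φ) c)
    (cseq : ℕ → ℕ → A)
    (hcseq : ∀ n, IsCharSeries v (matrixCoef v hA.isRingNorm T T (φseq n)) (cseq n)) :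
    ∀ ε : ℝ, 0 < ε → ∃ N : ℕ, ∀ n : ℕ, N ≤ n → ∀ m : ℕ, v (c m - cseq n m) ≤ ε := by
  classical
  intro ε hε
  have hv : IsRingNorm v := hA.isRingNorm
  obtain ⟨Cφ, hCφ1, hCφ⟩ := CharAux.exists_unit_ball_bound hA hnm φ hφ.1
  set a := matrixCoef v hA.isRingNorm T T φ with ha
  have hE1 : ∀ i : I, nm (T.symm (stdDelta v hA.isRingNorm i)) = 1 :=
    CharAux.nm_basis hA.isRingNorm T hT
  have haB : ∀ i j, v (a i j) ≤ Cφ := fun i j =>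
    (CharAux.matrixCoef_le hA.isRingNorm T hT φ i j).trans (hCφ _ (le_of_eq (hE1 i)))
  set η : ℝ := min ε 1 / 2 with hηdef
  have hηmin : 0 < min ε 1 := lt_min hε one_pos
  have hη0 : 0 < η := by rw [hηdef]; linarith
  have hη1 : η ≤ 1 := by
    have h := min_le_right ε 1
    rw [hηdef]; linarith
  have hηε : η ≤ ε := by
    have h := min_le_left ε 1
    rw [hηdef]; linarith
  have hηlt : η < 1 := by
    have h := min_le_right ε 1
    rw [hηdef]; linarith
  obtain ⟨g, hgcont, hgfr, hgapp⟩ := hφ.2 η hη0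
  obtain ⟨P, hPfg, hPrange⟩ := hgfr
  obtain ⟨gens, hgens⟩ := hPfg
  obtain ⟨Cg, hCg1, hCgb⟩ := CharAux.exists_unit_ball_bound hA hnm g hgcont
  set G := matrixCoef v hA.isRingNorm T T g with hG
  have hGb : ∀ i j, v (G i j) ≤ Cg := fun i j =>
    (CharAux.matrixCoef_le hA.isRingNorm T hT g i j).trans (hCgb _ (le_of_eq (hE1 i)))
  have hHb : ∀ i j, v (a i j - G i j) ≤ η := by
    intro i j
    have h1 : a i j - G i j = matrixCoef v hA.isRingNorm T T (φ - g) i j :=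
      (CharAux.matrixCoef_sub hA.isRingNorm T φ g i j).symm
    rw [h1]
    refine (CharAux.matrixCoef_le hA.isRingNorm T hT (φ - g) i j).trans ?_
    have h2 : (φ - g) (T.symm (stdDelta v hA.isRingNorm i))
        = φ (T.symm (stdDelta v hA.isRingNorm i)) - g (T.symm (stdDelta v hA.isRingNorm i)) :=
      rfl
    rw [h2]
    calc nm (φ (T.symm (stdDelta v hA.isRingNorm i))
            - g (T.symm (stdDelta v hA.isRingNorm i)))
        ≤ η * nm (T.symm (stdDelta v hA.isRingNorm i)) := hgapp _
      _ = η := by rw [hE1 i, mul_one]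
  -- row span data for g
  have hβex := fun i => CharAux.matrixCoef_row hA.isRingNorm T g gens
    (by rw [hgens]; exact hPrange) i
  choose β hβ using hβex
  have hspan : ∀ i j, G i j
      = ∑ k : {x : M // x ∈ gens}, β i k.1 * ((T k.1 : I → A)) j := by
    intro i j
    rw [hG, hβ i j]
    exact (Finset.sum_coe_sort gens fun p => β i p * ((T p : I → A)) j).symm
  have hκcard : Fintype.card {x : M // x ∈ gens} = gens.card := Fintype.card_coe gens
  -- choose the tail threshold
  have hCg0 : (0 : ℝ) < Cg := lt_of_lt_of_le one_pos hCg1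
  have hCgr0 : (0 : ℝ) < Cg ^ gens.card := pow_pos hCg0 _
  obtain ⟨k₀, hk₀⟩ := exists_pow_lt_of_lt_one (div_pos hε hCgr0) hηlt
  have htail : η ^ k₀ * Cg ^ gens.card ≤ ε :=
    le_of_lt ((lt_div_iff₀ hCgr0).mp hk₀)
  set r' := gens.card + k₀ with hr'
  have hCφ0 : (0 : ℝ) < Cφ := lt_of_lt_of_le one_pos hCφ1
  set δ : ℝ := min η (ε / Cφ ^ r') with hδdef
  have hδ0 : 0 < δ := lt_min hη0 (div_pos hε (pow_pos hCφ0 r'))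
  have hδη : δ ≤ η := min_le_left _ _
  obtain ⟨N, hN⟩ := hconv δ hδ0
  refine ⟨N, fun n hn mm => ?_⟩
  have hcn := hcseq n
  set an := matrixCoef v hA.isRingNorm T T (φseq n) with han
  have hdiffb : ∀ i j, v (a i j - an i j) ≤ δ := by
    intro i j
    have h1 : a i j - an i j = matrixCoef v hA.isRingNorm T T (φ - φseq n) i j :=
      (CharAux.matrixCoef_sub hA.isRingNorm T φ (φseq n) i j).symm
    rw [h1]
    refine (CharAux.matrixCoef_le hA.isRingNorm T hT (φ - φseq n) i j).trans ?_
    have h2 : (φ - φseq n) (T.symm (stdDelta v hA.isRingNorm i))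
        = -(φseq n (T.symm (stdDelta v hA.isRingNorm i))
            - φ (T.symm (stdDelta v hA.isRingNorm i))) := by
      show φ (T.symm (stdDelta v hA.isRingNorm i))
          - φseq n (T.symm (stdDelta v hA.isRingNorm i)) = _
      exact (neg_sub _ _).symm
    rw [h2, hnm.map_neg]
    calc nm (φseq n (T.symm (stdDelta v hA.isRingNorm i))
            - φ (T.symm (stdDelta v hA.isRingNorm i)))
        ≤ δ * nm (T.symm (stdDelta v hA.isRingNorm i)) := hN n hn _
      _ = δ := by rw [hE1 i, mul_one]
  have hanB : ∀ i j, v (an i j) ≤ Cφ := by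
    intro i j
    have h1 : an i j = a i j - (a i j - an i j) := by ring
    rw [h1]
    refine (CharAux.v_sub_le hA.isRingNorm _ _).trans (max_le (haB i j)
      ((hdiffb i j).trans ?_))
    calc δ ≤ η := hδη
      _ ≤ 1 := hη1
      _ ≤ Cφ := hCφ1
  have hHnb : ∀ i j, v (an i j - G i j) ≤ η := by
    intro i j
    have h1 : an i j - G i j = (a i j - G i j) - (a i j - an i j) := by ring
    rw [h1]
    exact (CharAux.v_sub_le hA.isRingNorm _ _).trans
      (max_le (hHb i j) ((hdiffb i j).trans hδη))
  by_cases hm : mm ≤ r'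
  · -- small coefficients: use the difference estimate
    have hsum := CharAux.hasNormSum_sub hA.isRingNorm (hc mm) (hcn mm)
    refine CharAux.hasNormSum_le hA.isRingNorm hsum hε.le fun S => ?_
    have heq : (-1 : A) ^ mm * detSubset a S.1 - (-1 : A) ^ mm * detSubset an S.1
        = (-1 : A) ^ mm * (detSubset a S.1 - detSubset an S.1) := by ring
    rw [heq, CharAux.v_neg_one_pow_mul hA.isRingNorm]
    have hδC : δ ≤ Cφ := by
      calc δ ≤ η := hδη
        _ ≤ 1 := hη1
        _ ≤ Cφ := hCφ1
    have hW2 := CharAux.v_detSubset_sub_le hA.isRingNorm a an hCφ1 hδ0.le hδC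
      hdiffb hanB S.1
    refine hW2.trans ?_
    rw [S.2]
    have h1 : Cφ ^ (mm - 1) ≤ Cφ ^ r' := pow_le_pow_right₀ hCφ1 (by omega)
    have h2 : δ ≤ ε / Cφ ^ r' := min_le_right _ _
    calc δ * Cφ ^ (mm - 1) ≤ (ε / Cφ ^ r') * Cφ ^ r' := by
          refine mul_le_mul h2 h1 (pow_nonneg hCφ0.le _) ?_
          positivity
      _ = ε := div_mul_cancel₀ ε (ne_of_gt (pow_pos hCφ0 r'))
  · push_neg at hm
    have key : ∀ (x : I → I → A) (cc : A), (∀ i j, v (x i j - G i j) ≤ η) →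
        (∀ i j, v (x i j) ≤ Cφ) →
        HasNormSum v
          (fun S : {S : Finset I // S.card = mm} => (-1 : A) ^ mm * detSubset x S.1) cc →
        v cc ≤ ε := by
      intro x cc hxH _ hsum
      refine CharAux.hasNormSum_le hA.isRingNorm hsum hε.le fun S => ?_
      rw [CharAux.v_neg_one_pow_mul hA.isRingNorm]
      have hW1 := CharAux.v_detSubset_le hA.isRingNorm x G (fun i j => x i j - G i j)
        (fun i j => by ring) (fun k : {x : M // x ∈ gens} => fun j => ((T k.1 : I → A)) j)
        (fun i k => β i k.1) hspan hCg1 hη0.le hη1 hGb hxH S.1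
        (by rw [hκcard, S.2]; omega)
      refine hW1.trans ?_
      rw [hκcard, S.2]
      have h1 : η ^ (mm - gens.card) ≤ η ^ k₀ :=
        pow_le_pow_of_le_one hη0.le hη1 (by omega)
      calc η ^ (mm - gens.card) * Cg ^ gens.card
          ≤ η ^ k₀ * Cg ^ gens.card :=
            mul_le_mul_of_nonneg_right h1 (pow_nonneg hCg0.le _)
        _ ≤ ε := htail
    have h1 := key a (c mm) hHb haB (hc mm)
    have h2 := key an (cseq n mm) hHnb hanB (hcn mm)
    calc v (c mm - cseq n mm) ≤ max (v (c mm)) (v (cseq n mm)) :=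
          CharAux.v_sub_le hA.isRingNorm _ _
      _ ≤ ε := max_le h1 h2
end

section
/- Let A be a Banach–Tate ring and P a finite Banach A-module, i.e. a Banach A-module that is finitely generated as an A-module. Then P has property (Pr) if and only if P is projective as an (abstract) A-module. -/
open scoped Classical

universe u v w

/-- A bundled Banach `A`-module (over the Banach–Tate ring `(A, v)`). -/
structure BanachModule (A : Type u) [Ring A] (v : A → ℝ) : Type (u + 1) where
  carrier : Type u
  [isAddCommGroup : AddCommGroup carrier]
  [isModule : Module A carrier]
  nm : carrier → ℝ
  isNorm : IsModuleNorm v nm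
  complete : NormComplete nm

attribute [instance] BanachModule.isAddCommGroup BanachModule.isModule

/-- The (maximum) norm on a product of two normed modules. -/
def prodNorm {M N : Type*} (nmM : M → ℝ) (nmN : N → ℝ) : M × N → ℝ :=
  fun x => max (nmM x.1) (nmN x.2)

/-- A Banach `A`-module is potentially ONable if it is `A`-linearly homeomorphic to
`c_A(I)` for some set `I`. -/
def PotentiallyONable {A : Type u} [Ring A] (v : A → ℝ) (hv : IsRingNorm v)
    {M : Type u} [AddCommGroup M] [Module A M] (nm : M → ℝ) : Prop :=
  ∃ (I : Type u) (T : M ≃ₗ[A] cA v hv I),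
    NormContinuous nm (cNorm v) T ∧ NormContinuous (cNorm v) nm T.symm

/-- A Banach `A`-module has property (Pr) if it is a direct summand of a potentially
ONable Banach `A`-module, i.e. `M × Q` is potentially ONable for some Banach
`A`-module `Q`. -/
def HasPr {A : Type u} [Ring A] (v : A → ℝ) (hv : IsRingNorm v)
    {M : Type u} [AddCommGroup M] [Module A M] (nm : M → ℝ) : Prop :=
  ∃ Q : BanachModule A v, PotentiallyONable v hv (prodNorm nm Q.nm)


namespace Stmt12

variable {A : Type u} [Ring A] {v : A → ℝ}

section Basic

variable {M : Type*} [AddCommGroup M] [Module A M] {nm : M → ℝ}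

theorem nm_zero (h : IsModuleNorm v nm) : nm 0 = 0 := (h.eq_zero_iff 0).2 rfl

theorem nm_sub_comm (h : IsModuleNorm v nm) (a b : M) : nm (a - b) = nm (b - a) := by
  rw [← h.map_neg (a - b), neg_sub]

theorem nm_sub_le (h : IsModuleNorm v nm) (a b c : M) :
    nm (a - c) ≤ max (nm (a - b)) (nm (b - c)) := by
  have : a - c = (a - b) + (b - c) := by abel
  rw [this]; exact h.add_le _ _

theorem nm_sub_le' (h : IsModuleNorm v nm) (a b : M) : nm (a - b) ≤ max (nm a) (nm b) := by
  have h1 := h.add_le a (-b)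
  rw [h.map_neg] at h1
  simpa [sub_eq_add_neg] using h1

theorem ringNorm_isModuleNorm (hv : IsRingNorm v) : IsModuleNorm v v where
  nonneg := hv.nonneg
  eq_zero_iff := hv.eq_zero_iff
  map_neg := hv.map_neg
  add_le := hv.add_le
  smul_le a b := by simpa [smul_eq_mul] using hv.mul_le a b

theorem nm_sum_le (h : IsModuleNorm v nm) {ι : Type*} (s : Finset ι) (f : ι → M) {B : ℝ}
    (hB : 0 ≤ B) (hf : ∀ i ∈ s, nm (f i) ≤ B) : nm (∑ i ∈ s, f i) ≤ B := by
  classical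
  induction s using Finset.induction with
  | empty => simpa [nm_zero h] using hB
  | @insert a s hx ih =>
    rw [Finset.sum_insert hx]
    refine le_trans (h.add_le _ _) (max_le (hf a (Finset.mem_insert_self a s)) ?_)
    exact ih fun i hi => hf i (Finset.mem_insert_of_mem hi)

/-- Scaling by a "multiplicative" unit scales any module norm exactly. -/
theorem unit_smul (hv : IsRingNorm v) (h : IsModuleNorm v nm) {b c : A} {rb : ℝ}
    (hbc : b * c = 1) (hcb : c * b = 1) (hb : ∀ a, v (b * a) = rb * v a) (hrb : 0 < rb)
    (m : M) : nm (b • m) = rb * nm m := by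
  have hvb : v b = rb := by simpa [hv.map_one] using hb 1
  have hvc : v c = rb⁻¹ := by
    have h1 : v (b * c) = rb * v c := hb c
    rw [hbc, hv.map_one] at h1
    field_simp
    linarith [h1]
  have h1 : nm (b • m) ≤ rb * nm m := by simpa [hvb] using h.smul_le b m
  have h2 : nm m ≤ rb⁻¹ * nm (b • m) := by
    have : nm ((c * b) • m) ≤ v c * nm (b • m) := by
      rw [mul_smul]; exact h.smul_le c (b • m)
    simpa [hcb, hvc] using this
  have h3 : rb * nm m ≤ nm (b • m) := by
    have := mul_le_mul_of_nonneg_left h2 hrb.le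
    rwa [← mul_assoc, mul_inv_cancel₀ hrb.ne', one_mul] at this
  linarith

end Basic


section Pi0

variable {ϖ : A}

theorem rho_pos (hv : IsRingNorm v) (hϖu : IsUnit ϖ) : 0 < v ϖ := by
  rcases lt_or_eq_of_le (hv.nonneg ϖ) with h | h
  · exact h
  · exfalso
    have hϖ0 : ϖ = 0 := (hv.eq_zero_iff ϖ).1 h.symm
    rw [hϖ0] at hϖu
    have h01 : (0 : A) = 1 := isUnit_zero_iff.1 hϖu
    have := hv.map_one
    rw [← h01, hv.map_zero] at this
    norm_num at this

theorem pow_mul_v (hϖm : ∀ b, v (ϖ * b) = v ϖ * v b) (j : ℕ) (a : A) : v (ϖ ^ j * a) = (v ϖ) ^ j * v a := by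
  induction j with
  | zero => simp
  | succ k ih =>
    have : ϖ ^ (k + 1) * a = ϖ * (ϖ ^ k * a) := by rw [pow_succ']; rw [mul_assoc]
    rw [this, hϖm, ih, pow_succ]; ring

/-- Normalization: any positive real can be scaled by the norm of a multiplicative
unit into the window `[ε·v ϖ, ε)`. -/
theorem normalize (hv : IsRingNorm v) (hϖu : IsUnit ϖ) (hϖ1 : v ϖ < 1)
    (hϖm : ∀ b, v (ϖ * b) = v ϖ * v b) (t ε : ℝ) (ht : 0 < t) (hε : 0 < ε) :
    ∃ (b c : A) (rb : ℝ), 0 < rb ∧ b * c = 1 ∧ c * b = 1 ∧ (∀ a, v (b * a) = rb * v a) ∧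
      ε * v ϖ ≤ rb * t ∧ rb * t < ε := by
  have hρ0 : 0 < v ϖ := rho_pos hv hϖu
  have hρinv : 1 < (v ϖ)⁻¹ := (one_lt_inv₀ hρ0).2 hϖ1
  set u := hϖu.unit with hu
  have huv : (u : A) = ϖ := hϖu.unit_spec
  have hpowcancel : ∀ j : ℕ, ϖ ^ j * ((u⁻¹ : Aˣ) : A) ^ j = 1 ∧ ((u⁻¹ : Aˣ) : A) ^ j * ϖ ^ j = 1 := by
    intro j
    constructor
    · calc ϖ ^ j * ((u⁻¹ : Aˣ) : A) ^ j = ((u ^ j * (u⁻¹) ^ j : Aˣ) : A) := by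
            push_cast [huv]; ring
      _ = 1 := by rw [inv_pow, mul_inv_cancel]; rfl
    · calc ((u⁻¹ : Aˣ) : A) ^ j * ϖ ^ j = (((u⁻¹) ^ j * u ^ j : Aˣ) : A) := by
            push_cast [huv]; ring
      _ = 1 := by rw [inv_pow, inv_mul_cancel]; rfl
  rcases lt_or_ge t ε with hcase | hcase
  · -- scale up with (u⁻¹)^j
    have hex : ∃ j : ℕ, ε * v ϖ ≤ ((v ϖ)⁻¹) ^ j * t := by
      obtain ⟨j, hj⟩ := pow_unbounded_of_one_lt ((ε * v ϖ) / t) hρinv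
      exact ⟨j, le_of_lt (by rwa [div_lt_iff₀ ht] at hj)⟩
    classical
    set j := Nat.find hex with hjdef
    have hjspec := Nat.find_spec hex
    refine ⟨((u⁻¹ : Aˣ) : A) ^ j, ϖ ^ j, ((v ϖ)⁻¹) ^ j, by positivity,
      (hpowcancel j).2, (hpowcancel j).1, ?_, hjspec, ?_⟩
    · intro a
      have h1 : v (ϖ ^ j * (((u⁻¹ : Aˣ) : A) ^ j * a)) = (v ϖ) ^ j * v (((u⁻¹ : Aˣ) : A) ^ j * a) :=
        pow_mul_v hϖm j _
      rw [← mul_assoc, (hpowcancel j).1, one_mul] at h1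
      have hρj : (0:ℝ) < (v ϖ) ^ j := by positivity
      rw [inv_pow, h1, ← mul_assoc, inv_mul_cancel₀ hρj.ne', one_mul]
    · rcases Nat.eq_zero_or_pos j with hj0 | hjpos
      · simpa [hj0] using hcase
      · have hmin : ¬ (ε * v ϖ ≤ ((v ϖ)⁻¹) ^ (j - 1) * t) := Nat.find_min hex (by omega)
        push_neg at hmin
        have hsucc : j = (j - 1) + 1 := by omega
        rw [hsucc, pow_succ]
        calc ((v ϖ)⁻¹) ^ (j-1) * (v ϖ)⁻¹ * t = (((v ϖ)⁻¹) ^ (j-1) * t) * (v ϖ)⁻¹ := by ring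
          _ < (ε * v ϖ) * (v ϖ)⁻¹ := by
              apply mul_lt_mul_of_pos_right hmin (by positivity)
          _ = ε := by field_simp
  · -- scale down with ϖ^j
    have hex : ∃ j : ℕ, (v ϖ) ^ j * t < ε := by
      obtain ⟨j, hj⟩ := exists_pow_lt_of_lt_one (div_pos hε ht) hϖ1
      exact ⟨j, by rw [lt_div_iff₀ ht] at hj; linarith⟩
    classical
    set j := Nat.find hex with hjdef
    have hjspec := Nat.find_spec hex
    refine ⟨ϖ ^ j, ((u⁻¹ : Aˣ) : A) ^ j, (v ϖ) ^ j, by positivity,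
      (hpowcancel j).1, (hpowcancel j).2, pow_mul_v hϖm j, ?_, hjspec⟩
    rcases Nat.eq_zero_or_pos j with hj0 | hjpos
    · exfalso
      rw [← hjdef, hj0] at hjspec
      simp at hjspec
      linarith
    · have hmin : ¬ ((v ϖ) ^ (j - 1) * t < ε) := Nat.find_min hex (by omega)
      push_neg at hmin
      have hsucc : j = (j - 1) + 1 := by omega
      rw [hsucc, pow_succ]
      calc ε * v ϖ ≤ ((v ϖ) ^ (j-1) * t) * v ϖ := by
            apply mul_le_mul_of_nonneg_right hmin hρ0.le
        _ = (v ϖ) ^ (j-1) * v ϖ * t := by ring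

end Pi0

section Bdd

/-- Bounded (linear) maps. -/
def Bdd {M N : Type*} (nmM : M → ℝ) (nmN : N → ℝ) (f : M → N) : Prop :=
  ∃ C : ℝ, 0 < C ∧ ∀ m, nmN (f m) ≤ C * nmM m

variable {M N : Type*} [AddCommGroup M] [Module A M] [AddCommGroup N] [Module A N]
  {nmM : M → ℝ} {nmN : N → ℝ}

theorem bdd_of_cont (hv : IsRingNorm v) {ϖ : A} (hϖu : IsUnit ϖ) (hϖ1 : v ϖ < 1)
    (hϖm : ∀ b, v (ϖ * b) = v ϖ * v b)
    (hM : IsModuleNorm v nmM) (hN : IsModuleNorm v nmN) (f : M →ₗ[A] N)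
    (hf : NormContinuous nmM nmN f) : Bdd nmM nmN f := by
  have hρ0 : 0 < v ϖ := rho_pos hv hϖu
  obtain ⟨δ, hδ0, hδ⟩ := hf 0 1 one_pos
  refine ⟨1 / (δ * v ϖ), by positivity, fun m => ?_⟩
  rcases eq_or_ne m 0 with rfl | hm
  · simp [nm_zero hM, nm_zero hN, map_zero]
  · have ht : 0 < nmM m := by
      rcases lt_or_eq_of_le (hM.nonneg m) with h | h
      · exact h
      · exact absurd ((hM.eq_zero_iff m).1 h.symm) hm
    obtain ⟨b, c, rb, hrb, hbc, hcb, hb, hlow, hhigh⟩ := normalize hv hϖu hϖ1 hϖm (nmM m) δ ht hδ0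
    have h1 : nmM (b • m - 0) < δ := by
      rw [sub_zero, unit_smul hv hM hbc hcb hb hrb]; exact hhigh
    have h2 := hδ (b • m) h1
    rw [map_zero, sub_zero, map_smul, unit_smul hv hN hbc hcb hb hrb] at h2
    -- h2 : rb * nmN (f m) < 1, hlow : δ * v ϖ ≤ rb * nmM m
    rw [one_div, inv_mul_eq_div, le_div_iff₀ (by positivity)]
    nlinarith [mul_le_mul_of_nonneg_left hlow (hN.nonneg (f m)),
      mul_le_mul_of_nonneg_left h2.le (hM.nonneg m), hM.nonneg m, hN.nonneg (f m)]

theorem cont_of_bdd (hM : IsModuleNorm v nmM) (hN : IsModuleNorm v nmN) (f : M →ₗ[A] N)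
    (hf : Bdd nmM nmN f) : NormContinuous nmM nmN f := by
  obtain ⟨C, hC0, hC⟩ := hf
  intro m ε hε
  refine ⟨ε / C, by positivity, fun m' hm' => ?_⟩
  have : f m' - f m = f (m' - m) := by rw [map_sub]
  rw [this]
  calc nmN (f (m' - m)) ≤ C * nmM (m' - m) := hC _
    _ < C * (ε / C) := by exact mul_lt_mul_of_pos_left hm' hC0
    _ = ε := by field_simp

end Bdd


section CNorm

variable {hv : IsRingNorm v} {I : Type v}

theorem cA_coe_add (f g : cA v hv I) (i : I) :
    ((f + g : cA v hv I) : I → A) i = (f : I → A) i + (g : I → A) i := rfl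

theorem cA_coe_smul (a : A) (f : cA v hv I) (i : I) :
    ((a • f : cA v hv I) : I → A) i = a * (f : I → A) i := rfl

theorem cNorm_bddAbove (f : cA v hv I) : BddAbove (Set.range fun i => v ((f : I → A) i)) := by
  have h1 : (Set.range fun i => v ((f : I → A) i)) ⊆
      Set.Iic 1 ∪ (fun i => v ((f : I → A) i)) '' {i | 1 < v ((f : I → A) i)} := by
    rintro x ⟨i, rfl⟩
    rcases le_or_gt (v ((f : I → A) i)) 1 with h | h
    · exact Or.inl h
    · exact Or.inr ⟨i, h, rfl⟩
  exact BddAbove.mono h1 (BddAbove.union bddAbove_Iic ((f.2 1 one_pos).image _).bddAbove)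

theorem le_cNorm (f : cA v hv I) (i : I) : v ((f : I → A) i) ≤ cNorm v f :=
  le_ciSup (cNorm_bddAbove f) i

theorem cNorm_le (f : cA v hv I) {B : ℝ} (hB : 0 ≤ B) (h : ∀ i, v ((f : I → A) i) ≤ B) :
    cNorm v f ≤ B :=
  Real.iSup_le h hB

theorem cNorm_nonneg (hv' : IsRingNorm v) (f : cA v hv I) : 0 ≤ cNorm v f :=
  Real.iSup_nonneg fun i => hv'.nonneg _

theorem cNorm_isModuleNorm (hv' : IsRingNorm v) :
    IsModuleNorm v (cNorm v (hv := hv) (I := I)) where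
  nonneg := cNorm_nonneg hv'
  eq_zero_iff f := by
    constructor
    · intro h
      apply Subtype.ext
      funext i
      have h1 : v ((f : I → A) i) ≤ 0 := h ▸ le_cNorm f i
      have h2 := hv'.nonneg ((f : I → A) i)
      exact (hv'.eq_zero_iff _).1 (le_antisymm h1 h2)
    · rintro rfl
      refine le_antisymm (cNorm_le _ le_rfl fun i => ?_) (cNorm_nonneg hv' _)
      have : ((0 : cA v hv I) : I → A) i = 0 := rfl
      rw [this, hv'.map_zero]
  map_neg f := by
    unfold cNorm
    congr 1
    funext i
    have : ((-f : cA v hv I) : I → A) i = -((f : I → A) i) := rfl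
    rw [this, hv'.map_neg]
  add_le f g := by
    refine cNorm_le _ (le_max_of_le_left (cNorm_nonneg hv' f)) fun i => ?_
    rw [cA_coe_add]
    refine le_trans (hv'.add_le _ _) (max_le_max ?_ ?_) <;> exact le_cNorm _ i
  smul_le a f := by
    refine cNorm_le _ (mul_nonneg (hv'.nonneg a) (cNorm_nonneg hv' f)) fun i => ?_
    rw [cA_coe_smul]
    exact le_trans (hv'.mul_le _ _) (mul_le_mul_of_nonneg_left (le_cNorm f i) (hv'.nonneg a))

theorem projCA_coe (S : Finset I) (f : cA v hv I) (i : I) :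
    ((projCA v hv S f : cA v hv I) : I → A) i = if i ∈ S then (f : I → A) i else 0 := rfl

theorem cNorm_sub_projCA (hv' : IsRingNorm v) (S : Finset I) (f : cA v hv I) {ε : ℝ}
    (hε : 0 ≤ ε) (hS : {i | ε < v ((f : I → A) i)} ⊆ S) :
    cNorm v (f - projCA v hv S f) ≤ ε := by
  refine cNorm_le _ hε fun i => ?_
  have hcoe : ((f - projCA v hv S f : cA v hv I) : I → A) i
      = (f : I → A) i - (if i ∈ S then (f : I → A) i else 0) := rfl
  rw [hcoe]
  by_cases h : i ∈ S
  · simp only [h, if_true, sub_self, hv'.map_zero]; exact hε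
  · simp only [h, if_false, sub_zero]
    by_contra hc
    push_neg at hc
    exact h (hS hc)

end CNorm

section Prod

variable {M N : Type*} [AddCommGroup M] [Module A M] [AddCommGroup N] [Module A N]
  {nmM : M → ℝ} {nmN : N → ℝ}

theorem prod_isModuleNorm (hv' : IsRingNorm v) (hM : IsModuleNorm v nmM) (hN : IsModuleNorm v nmN) :
    IsModuleNorm v (prodNorm nmM nmN) where
  nonneg x := le_max_of_le_left (hM.nonneg _)
  eq_zero_iff x := by
    constructor
    · intro h
      have h1 : nmM x.1 ≤ 0 := h ▸ le_max_left _ _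
      have h2 : nmN x.2 ≤ 0 := h ▸ le_max_right _ _
      have e1 : x.1 = 0 := (hM.eq_zero_iff _).1 (le_antisymm h1 (hM.nonneg _))
      have e2 : x.2 = 0 := (hN.eq_zero_iff _).1 (le_antisymm h2 (hN.nonneg _))
      exact Prod.ext e1 e2
    · rintro rfl
      simp only [prodNorm, Prod.fst_zero, Prod.snd_zero, nm_zero hM, nm_zero hN, max_self]
  map_neg x := by simp only [prodNorm, Prod.fst_neg, Prod.snd_neg, hM.map_neg, hN.map_neg]
  add_le x y := by
    simp only [prodNorm, Prod.fst_add, Prod.snd_add]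
    apply max_le
    · exact le_trans (hM.add_le _ _) (max_le_max (le_max_left _ _) (le_max_left _ _))
    · exact le_trans (hN.add_le _ _) (max_le_max (le_max_right _ _) (le_max_right _ _))
  smul_le a x := by
    simp only [prodNorm, Prod.smul_fst, Prod.smul_snd]
    apply max_le
    · exact le_trans (hM.smul_le _ _)
        (mul_le_mul_of_nonneg_left (le_max_left _ _) (hv'.nonneg a))
    · exact le_trans (hN.smul_le _ _)
        (mul_le_mul_of_nonneg_left (le_max_right _ _) (hv'.nonneg a))

end Prod


section PiMap

variable {P : Type*} [AddCommGroup P] [Module A P]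

/-- The linear map `(Fin m → A) → P` given by coefficients on a list of generators. -/
def piMap {m : ℕ} (g : Fin m → P) : (Fin m → A) →ₗ[A] P where
  toFun x := ∑ k, x k • g k
  map_add' x y := by simp [add_smul, Finset.sum_add_distrib]
  map_smul' a x := by simp [mul_smul, Finset.smul_sum]

@[simp] theorem piMap_apply {m : ℕ} (g : Fin m → P) (x : Fin m → A) :
    Stmt12.piMap g x = ∑ k, x k • g k := rfl

theorem pi_single_decomp {n : ℕ} {M : Type*} [AddCommGroup M] [Module A M]
    (ψ : (Fin (n+1) → A) →ₗ[A] M) (z : Fin (n+1) → A) :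
    ψ z = ∑ k, (z k) • ψ (Pi.single k 1) := by
  conv_lhs => rw [← Finset.univ_sum_single z]
  rw [map_sum]
  refine Finset.sum_congr rfl fun k _ => ?_
  have h1 : Pi.single k (z k) = z k • (Pi.single k 1 : Fin (n+1) → A) := by
    rw [← Pi.single_smul, smul_eq_mul, mul_one]
  rw [h1, map_smul]

theorem bdd_from_pi {n : ℕ} {M : Type*} [AddCommGroup M] [Module A M] {nmM : M → ℝ}
    (hv' : IsRingNorm v) (hM : IsModuleNorm v nmM) (ψ : (Fin (n+1) → A) →ₗ[A] M) :
    ∃ C : ℝ, 0 < C ∧ ∀ (z : Fin (n+1) → A) (B : ℝ), 0 ≤ B → (∀ k, v (z k) ≤ B) →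
      nmM (ψ z) ≤ C * B := by
  set C := (Finset.univ.sup' Finset.univ_nonempty fun k => nmM (ψ (Pi.single k 1))) + 1 with hC
  have hle : ∀ k : Fin (n+1), nmM (ψ (Pi.single k 1)) ≤ C := fun k =>
    le_trans (Finset.le_sup' (fun k => nmM (ψ (Pi.single k 1))) (Finset.mem_univ k))
      (by simp [hC])
  have hC0 : 0 < C := by
    have h1 := Finset.le_sup' (fun k => nmM (ψ (Pi.single k 1))) (Finset.mem_univ (0 : Fin (n+1)))
    have h2 := hM.nonneg (ψ (Pi.single (0 : Fin (n+1)) 1))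
    rw [hC]; linarith
  refine ⟨C, hC0, fun z B hB hz => ?_⟩
  rw [pi_single_decomp ψ z]
  refine nm_sum_le hM _ _ (by positivity) fun k _ => ?_
  refine le_trans (hM.smul_le _ _) ?_
  rw [mul_comm C B]
  exact mul_le_mul (hz k) (hle k) (hM.nonneg _) hB

end PiMap


section Baire

variable {P : Type*} [AddCommGroup P] [Module A P] {nmP : P → ℝ}

theorem baire (hP : IsModuleNorm v nmP) (hPc : NormComplete nmP) (F : ℕ → Set P)
    (hclosed : ∀ k q, q ∉ F k → ∃ δ, 0 < δ ∧ ∀ z, nmP (z - q) < δ → z ∉ F k)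
    (hcover : ∀ p, ∃ k, p ∈ F k) :
    ∃ (k : ℕ) (p₀ : P) (ε : ℝ), 0 < ε ∧ ∀ q, nmP (q - p₀) < ε → q ∈ F k := by
  by_contra hcon
  push_neg at hcon
  have step : ∀ (k : ℕ) (p : P) (ε : ℝ), 0 < ε →
      ∃ qd : P × ℝ, 0 < qd.2 ∧ qd.2 ≤ ε / 2 ∧ nmP (qd.1 - p) < ε ∧
        ∀ z, nmP (z - qd.1) < qd.2 → z ∉ F k := by
    intro k p ε hε
    obtain ⟨q, hq1, hq2⟩ := hcon k p ε hε
    obtain ⟨δ, hδ0, hδ⟩ := hclosed k q hq2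
    refine ⟨(q, min δ (ε / 2)), lt_min hδ0 (by linarith), min_le_right _ _, hq1, ?_⟩
    intro z hz
    exact hδ z (lt_of_lt_of_le hz (min_le_left _ _))
  classical
  let seq : ℕ → P × ℝ := fun k => Nat.rec ((0 : P), (1 : ℝ))
    (fun k ih => if h : 0 < ih.2 then Classical.choose (step k ih.1 ih.2 h) else ih) k
  have hseq0 : seq 0 = ((0 : P), (1 : ℝ)) := rfl
  have hpos : ∀ k, 0 < (seq k).2 := by
    intro k
    induction k with
    | zero => norm_num [hseq0]
    | succ k ih =>
      have he : seq (k+1) = Classical.choose (step k (seq k).1 (seq k).2 ih) := by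
        show (if h : 0 < (seq k).2 then _ else _) = _
        rw [dif_pos ih]
      rw [he]
      exact (Classical.choose_spec (step k (seq k).1 (seq k).2 ih)).1
  have hspec : ∀ k, (seq (k+1)).2 ≤ (seq k).2 / 2 ∧ nmP ((seq (k+1)).1 - (seq k).1) < (seq k).2 ∧
      ∀ z, nmP (z - (seq (k+1)).1) < (seq (k+1)).2 → z ∉ F k := by
    intro k
    have he : seq (k+1) = Classical.choose (step k (seq k).1 (seq k).2 (hpos k)) := by
      show (if h : 0 < (seq k).2 then _ else _) = _
      rw [dif_pos (hpos k)]
    have hs := Classical.choose_spec (step k (seq k).1 (seq k).2 (hpos k))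
    rw [← he] at hs
    exact ⟨hs.2.1, hs.2.2.1, hs.2.2.2⟩
  have hdec : ∀ k, (seq (k+1)).2 ≤ (seq k).2 := fun k =>
    le_trans (hspec k).1 (by linarith [hpos k])
  have hmono : ∀ j k, j ≤ k → (seq k).2 ≤ (seq j).2 := by
    intro j k hjk
    induction k, hjk using Nat.le_induction with
    | base => exact le_rfl
    | succ k hk ih => exact le_trans (hdec k) ih
  have hsmall : ∀ k, (seq k).2 ≤ (1/2 : ℝ)^k := by
    intro k
    induction k with
    | zero => simp [hseq0]
    | succ k ih =>
      calc (seq (k+1)).2 ≤ (seq k).2/2 := (hspec k).1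
        _ ≤ (1/2 : ℝ)^k / 2 := by linarith
        _ = (1/2 : ℝ)^(k+1) := by rw [pow_succ]; ring
  have hball : ∀ j k, j ≤ k → nmP ((seq k).1 - (seq j).1) < (seq j).2 := by
    intro j k hjk
    induction k, hjk using Nat.le_induction with
    | base => simpa [nm_zero hP] using hpos j
    | succ k hk ih =>
      refine lt_of_le_of_lt (nm_sub_le hP _ (seq k).1 _) (max_lt ?_ ih)
      exact lt_of_lt_of_le (hspec k).2.1 (hmono j k hk)
  have hcauchy : NormCauchy nmP (fun k => (seq k).1) := by
    intro ε hε
    obtain ⟨K, hK⟩ := exists_pow_lt_of_lt_one hε (by norm_num : (1:ℝ)/2 < 1)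
    refine ⟨K, fun i j hi hj => ?_⟩
    refine lt_of_le_of_lt (nm_sub_le hP _ (seq K).1 _) (max_lt ?_ ?_)
    · exact lt_trans (lt_of_lt_of_le (hball K i hi) (hsmall K)) hK
    · rw [nm_sub_comm hP]
      exact lt_trans (lt_of_lt_of_le (hball K j hj) (hsmall K)) hK
  obtain ⟨pstar, hpstar⟩ := hPc _ hcauchy
  have hnot : ∀ k, pstar ∉ F k := by
    intro k
    refine (hspec k).2.2 pstar ?_
    obtain ⟨J, hJ⟩ := hpstar (seq (k+1)).2 (hpos (k+1))
    refine lt_of_le_of_lt (nm_sub_le hP pstar ((seq (max J (k+1))).1) _) (max_lt ?_ ?_)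
    · rw [nm_sub_comm hP]
      exact hJ (max J (k+1)) (le_max_left _ _)
    · exact hball (k+1) (max J (k+1)) (le_max_right _ _)
  obtain ⟨k, hk⟩ := hcover pstar
  exact hnot k hk

end Baire

section ApproxSet

variable {P : Type*} [AddCommGroup P] [Module A P]

/-- The closure of the image under `Stmt12.piMap g` of the ball of radius `r`. -/
def approxSet (v : A → ℝ) {P : Type*} [AddCommGroup P] [Module A P] (nmP : P → ℝ)
    {m : ℕ} (g : Fin m → P) (r : ℝ) : Set P :=
  {p | ∀ ε : ℝ, 0 < ε → ∃ x : Fin m → A, (∀ k, v (x k) ≤ r) ∧ nmP (p - Stmt12.piMap g x) < ε}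

theorem approx_sub {nmP : P → ℝ} (hv' : IsRingNorm v) (hP : IsModuleNorm v nmP) {m : ℕ}
    {g : Fin m → P} {r : ℝ} {p q : P} (hp : p ∈ approxSet v nmP g r)
    (hq : q ∈ approxSet v nmP g r) : p - q ∈ approxSet v nmP g r := by
  intro ε hε
  obtain ⟨x, hx1, hx2⟩ := hp ε hε
  obtain ⟨y, hy1, hy2⟩ := hq ε hε
  refine ⟨x - y, fun k => ?_, ?_⟩
  · have : v (x k - y k) ≤ max (v (x k)) (v (y k)) := by
      have h1 := hv'.add_le (x k) (-(y k))
      rw [hv'.map_neg] at h1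
      simpa [sub_eq_add_neg] using h1
    exact le_trans this (max_le (hx1 k) (hy1 k))
  · have heq : p - q - Stmt12.piMap g (x - y) = (p - Stmt12.piMap g x) - (q - Stmt12.piMap g y) := by
      rw [map_sub]; abel
    rw [heq]
    exact lt_of_le_of_lt (nm_sub_le' hP _ _) (max_lt hx2 hy2)

theorem approx_closed {nmP : P → ℝ} (hP : IsModuleNorm v nmP) {m : ℕ}
    {g : Fin m → P} {r : ℝ} {q : P} (hq : q ∉ approxSet v nmP g r) :
    ∃ δ, 0 < δ ∧ ∀ z, nmP (z - q) < δ → z ∉ approxSet v nmP g r := by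
  simp only [approxSet, Set.mem_setOf_eq, not_forall, not_exists, not_and, not_lt] at hq
  obtain ⟨ε, hε0, hε⟩ := hq
  refine ⟨ε, hε0, fun z hz hmem => ?_⟩
  obtain ⟨x, hx1, hx2⟩ := hmem ε hε0
  have h1 : nmP (q - Stmt12.piMap g x) < ε := by
    refine lt_of_le_of_lt (nm_sub_le hP q z (Stmt12.piMap g x)) (max_lt ?_ hx2)
    rw [nm_sub_comm hP]; exact hz
  exact absurd h1 (not_lt.2 (hε x hx1))

end ApproxSet


section OMT

variable {ϖ : A}

theorem pow_cancel (hϖu : IsUnit ϖ) (j : ℕ) :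
    ϖ ^ j * ((hϖu.unit⁻¹ : Aˣ) : A) ^ j = 1 ∧ ((hϖu.unit⁻¹ : Aˣ) : A) ^ j * ϖ ^ j = 1 := by
  constructor
  · calc ϖ ^ j * ((hϖu.unit⁻¹ : Aˣ) : A) ^ j
        = ((hϖu.unit ^ j * (hϖu.unit⁻¹) ^ j : Aˣ) : A) := by
          push_cast [hϖu.unit_spec]; ring
    _ = 1 := by rw [inv_pow, mul_inv_cancel]; rfl
  · calc ((hϖu.unit⁻¹ : Aˣ) : A) ^ j * ϖ ^ j
        = (((hϖu.unit⁻¹) ^ j * hϖu.unit ^ j : Aˣ) : A) := by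
          push_cast [hϖu.unit_spec]; ring
    _ = 1 := by rw [inv_pow, inv_mul_cancel]; rfl

variable {P : Type*} [AddCommGroup P] [Module A P] {nmP : P → ℝ}

/-- **Open mapping theorem** for finitely generated Banach modules over a Banach–Tate
ring: coefficients can be chosen with norms bounded by the norm of the element. -/
theorem omt (hv : IsRingNorm v) (hϖu : IsUnit ϖ) (hϖ1 : v ϖ < 1)
    (hϖm : ∀ b, v (ϖ * b) = v ϖ * v b) (hAc : NormComplete v)
    (hP : IsModuleNorm v nmP) (hPc : NormComplete nmP)
    {n : ℕ} (g : Fin (n+1) → P) (hg : ∀ p, ∃ x : Fin (n+1) → A, Stmt12.piMap g x = p) :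
    ∃ C : ℝ, 0 < C ∧ ∀ p, ∃ x : Fin (n+1) → A, Stmt12.piMap g x = p ∧ ∀ k, v (x k) ≤ C * nmP p := by
  classical
  have hρ0 : 0 < v ϖ := rho_pos hv hϖu
  have hρinv : 1 < (v ϖ)⁻¹ := (one_lt_inv₀ hρ0).2 hϖ1
  set ρ := v ϖ with hρdef
  -- the sets cover P
  have hcover : ∀ p, ∃ k : ℕ, p ∈ approxSet v nmP g (ρ⁻¹ ^ k) := by
    intro p
    obtain ⟨x, hx⟩ := hg p
    obtain ⟨K, hK⟩ := pow_unbounded_of_one_lt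
      (Finset.univ.sup' Finset.univ_nonempty fun k => v (x k)) hρinv
    refine ⟨K, fun ε hε => ⟨x, fun k => ?_, by simp [hx, nm_zero hP, hε]⟩⟩
    exact le_trans (Finset.le_sup' (fun k => v (x k)) (Finset.mem_univ k)) hK.le
  -- Baire category
  obtain ⟨k0, p₀, ε₁, hε₁, hballmem⟩ := baire hP hPc (fun k => approxSet v nmP g (ρ⁻¹ ^ k))
    (fun k q hq => approx_closed hP hq) hcover
  set r₀ := ρ⁻¹ ^ k0 with hr₀def
  have hr₀0 : 0 < r₀ := by positivity
  -- ball at 0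
  have hzero : ∀ q, nmP q < ε₁ → q ∈ approxSet v nmP g r₀ := by
    intro q hq
    have h1 : (q + p₀) ∈ approxSet v nmP g r₀ := hballmem (q + p₀) (by simpa using hq)
    have h2 : p₀ ∈ approxSet v nmP g r₀ := hballmem p₀ (by simpa [nm_zero hP] using hε₁)
    simpa using approx_sub hv hP h1 h2
  -- scaled memberships
  have hscale : ∀ (j : ℕ) (q : P), nmP q < ε₁ * ρ ^ j → ∀ η, 0 < η →
      ∃ x : Fin (n+1) → A, (∀ k, v (x k) ≤ ρ ^ j * r₀) ∧ nmP (q - Stmt12.piMap g x) < η := by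
    intro j q hq η hη
    set c : A := ((hϖu.unit⁻¹ : Aˣ) : A) ^ j with hcdef
    have hc := pow_cancel hϖu j
    have hbv : ∀ a, v (ϖ ^ j * a) = ρ ^ j * v a := pow_mul_v hϖm j
    have hsm : ∀ m : P, nmP (ϖ ^ j • m) = ρ ^ j * nmP m := fun m =>
      unit_smul hv hP hc.1 hc.2 hbv (by positivity) m
    have hq' : nmP (c • q) < ε₁ := by
      have h1 : nmP (ϖ ^ j • c • q) = ρ ^ j * nmP (c • q) := hsm _
      rw [smul_smul, hc.1, one_smul] at h1
      nlinarith [hP.nonneg (c • q), pow_pos hρ0 j]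
    obtain ⟨x', hx'1, hx'2⟩ := hzero (c • q) hq' (η / ρ ^ j) (by positivity)
    refine ⟨fun k => ϖ ^ j * x' k, fun k => ?_, ?_⟩
    · rw [hbv]
      exact mul_le_mul_of_nonneg_left (hx'1 k) (by positivity)
    · have hxe : (fun k => ϖ ^ j * x' k) = ϖ ^ j • x' := rfl
      rw [hxe, map_smul]
      have hqq : q - ϖ ^ j • Stmt12.piMap g x' = ϖ ^ j • (c • q - Stmt12.piMap g x') := by
        rw [smul_sub, smul_smul, hc.1, one_smul]
      rw [hqq, hsm]
      calc ρ ^ j * nmP (c • q - Stmt12.piMap g x') < ρ ^ j * (η / ρ ^ j) :=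
            mul_lt_mul_of_pos_left hx'2 (by positivity)
        _ = η := by field_simp
  -- exact surjectivity on the ball
  have hexact : ∀ q, nmP q < ε₁ → ∃ x : Fin (n+1) → A, (∀ k, v (x k) ≤ r₀) ∧ Stmt12.piMap g x = q := by
    intro q hq
    have hstep : ∀ (j : ℕ) (r : P), nmP r < ε₁ * ρ ^ j →
        ∃ x : Fin (n+1) → A, (∀ k, v (x k) ≤ ρ ^ j * r₀) ∧
          nmP (r - Stmt12.piMap g x) < ε₁ * ρ ^ (j+1) := by
      intro j r h
      exact hscale j r h (ε₁ * ρ ^ (j+1)) (by positivity)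
    let pick : ℕ → P → (Fin (n+1) → A) := fun j r =>
      if h : nmP r < ε₁ * ρ ^ j then Classical.choose (hstep j r h) else 0
    let rem : ℕ → P := fun m => Nat.rec q (fun j r => r - Stmt12.piMap g (pick j r)) m
    have hrem : ∀ j, nmP (rem j) < ε₁ * ρ ^ j := by
      intro j
      induction j with
      | zero => show nmP q < ε₁ * ρ ^ 0; simpa using hq
      | succ j ih =>
        have he : rem (j+1) = rem j - Stmt12.piMap g (Classical.choose (hstep j (rem j) ih)) := by
          show rem j - Stmt12.piMap g (pick j (rem j)) = _
          have : pick j (rem j) = Classical.choose (hstep j (rem j) ih) := dif_pos ih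
          rw [this]
        rw [he]
        exact (Classical.choose_spec (hstep j (rem j) ih)).2
    have hpick : ∀ j k, v (pick j (rem j) k) ≤ ρ ^ j * r₀ := by
      intro j k
      have he : pick j (rem j) = Classical.choose (hstep j (rem j) (hrem j)) := dif_pos (hrem j)
      rw [he]
      exact (Classical.choose_spec (hstep j (rem j) (hrem j))).1 k
    have htel : ∀ m, q - Stmt12.piMap g (∑ j ∈ Finset.range m, pick j (rem j)) = rem m := by
      intro m
      induction m with
      | zero => simp; rfl
      | succ m ih =>
        rw [Finset.sum_range_succ, map_add]
        have he : rem (m+1) = rem m - Stmt12.piMap g (pick m (rem m)) := rfl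
        rw [he, ← ih]
        abel
    have hsum_coord : ∀ (m : ℕ) (k : Fin (n+1)),
        (∑ j ∈ Finset.range m, pick j (rem j)) k = ∑ j ∈ Finset.range m, pick j (rem j) k := by
      intro m k
      exact Finset.sum_apply k _ _
    have hvA : IsModuleNorm v v := ringNorm_isModuleNorm hv
    have key : ∀ (k : Fin (n+1)) (l m : ℕ), l ≤ m →
        v ((∑ j ∈ Finset.range m, pick j (rem j) k) - ∑ j ∈ Finset.range l, pick j (rem j) k)
          ≤ ρ ^ l * r₀ := by
      intro k l m hlm
      rw [← Finset.sum_Ico_eq_sub _ hlm]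
      refine nm_sum_le hvA _ _ (by positivity) fun jj hjj => ?_
      have h1 : v (pick jj (rem jj) k) ≤ ρ ^ jj * r₀ := hpick jj k
      have h2 : ρ ^ jj ≤ ρ ^ l := pow_le_pow_of_le_one hρ0.le hϖ1.le (Finset.mem_Ico.1 hjj).1
      nlinarith
    have hcoord : ∀ k : Fin (n+1), ∃ y : A,
        NormLim v (fun m => ∑ j ∈ Finset.range m, pick j (rem j) k) y := by
      intro k
      apply hAc
      intro ε hε
      obtain ⟨N, hN⟩ := exists_pow_lt_of_lt_one (show (0:ℝ) < ε / r₀ by positivity) hϖ1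
      have hNb : ρ ^ N * r₀ < ε := by
        rw [lt_div_iff₀ hr₀0] at hN
        linarith
      refine ⟨N, fun i j hi hj => ?_⟩
      rcases le_total j i with h | h
      · refine lt_of_le_of_lt (le_trans (key k j i h) ?_) hNb
        have : ρ ^ j ≤ ρ ^ N := pow_le_pow_of_le_one hρ0.le hϖ1.le hj
        nlinarith
      · rw [← hv.map_neg, neg_sub]
        refine lt_of_le_of_lt (le_trans (key k i j h) ?_) hNb
        have : ρ ^ i ≤ ρ ^ N := pow_le_pow_of_le_one hρ0.le hϖ1.le hi
        nlinarith
    choose y hy using hcoord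
    have hsle : ∀ (m : ℕ) (k : Fin (n+1)), v (∑ j ∈ Finset.range m, pick j (rem j) k) ≤ r₀ := by
      intro m k
      refine nm_sum_le hvA _ _ hr₀0.le fun jj _ => ?_
      have h1 := hpick jj k
      have h2 : ρ ^ jj ≤ 1 := pow_le_one₀ hρ0.le hϖ1.le
      nlinarith
    have hyb : ∀ k, v (y k) ≤ r₀ := by
      intro k
      obtain ⟨N, hN⟩ := hy k r₀ hr₀0
      have h1 : v (y k - ∑ j ∈ Finset.range N, pick j (rem j) k) < r₀ := by
        have := hN N le_rfl
        rwa [← hv.map_neg, neg_sub] at this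
      have h2 := hsle N k
      have h3 : y k = (y k - ∑ j ∈ Finset.range N, pick j (rem j) k)
          + ∑ j ∈ Finset.range N, pick j (rem j) k := by abel
      calc v (y k) ≤ max (v (y k - ∑ j ∈ Finset.range N, pick j (rem j) k))
            (v (∑ j ∈ Finset.range N, pick j (rem j) k)) := by
            conv_lhs => rw [h3]
            exact hv.add_le _ _
        _ ≤ r₀ := max_le h1.le h2
    refine ⟨y, hyb, ?_⟩
    obtain ⟨Cφ, hCφ0, hCφ⟩ := bdd_from_pi hv hP (Stmt12.piMap g)
    have hzero' : ∀ η, 0 < η → nmP (q - Stmt12.piMap g y) < η := by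
      intro η hη
      obtain ⟨m1, hm1⟩ := exists_pow_lt_of_lt_one (show (0:ℝ) < η / ε₁ by positivity) hϖ1
      have hm1b : ε₁ * ρ ^ m1 < η := by
        rw [lt_div_iff₀ hε₁] at hm1
        linarith
      set η' := η / (2 * Cφ) with hη'def
      have hη'0 : 0 < η' := by positivity
      have hcl : ∀ k : Fin (n+1), ∃ N, ∀ m, N ≤ m →
          v ((∑ j ∈ Finset.range m, pick j (rem j) k) - y k) < η' := fun k => hy k η' hη'0
      choose Nk hNk using hcl
      set m := max m1 (Finset.univ.sup Nk) with hmdef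
      have hm_m1 : m1 ≤ m := le_max_left _ _
      have hm_k : ∀ k, Nk k ≤ m :=
        fun k => le_trans (Finset.le_sup (Finset.mem_univ k)) (le_max_right _ _)
      set sv := ∑ j ∈ Finset.range m, pick j (rem j) with hsvdef
      have hsplit : q - Stmt12.piMap g y = (q - Stmt12.piMap g sv) + Stmt12.piMap g (sv - y) := by
        rw [map_sub]; abel
      have hb1 : nmP (q - Stmt12.piMap g sv) < η := by
        rw [htel m]
        refine lt_trans (hrem m) (lt_of_le_of_lt ?_ hm1b)
        have : ρ ^ m ≤ ρ ^ m1 := pow_le_pow_of_le_one hρ0.le hϖ1.le hm_m1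
        nlinarith
      have hb2 : nmP (Stmt12.piMap g (sv - y)) < η := by
        have hcoords : ∀ k, v ((sv - y) k) ≤ η' := by
          intro k
          have h1 : (sv - y) k = (∑ j ∈ Finset.range m, pick j (rem j) k) - y k := by
            rw [hsvdef]
            simp [Finset.sum_apply]
          rw [h1]
          exact (hNk k m (hm_k k)).le
        have := hCφ (sv - y) η' hη'0.le hcoords
        calc nmP (Stmt12.piMap g (sv - y)) ≤ Cφ * η' := this
          _ = η / 2 := by rw [hη'def]; field_simp
          _ < η := by linarith
      calc nmP (q - Stmt12.piMap g y) ≤ max (nmP (q - Stmt12.piMap g sv)) (nmP (Stmt12.piMap g (sv - y))) := by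
            conv_lhs => rw [hsplit]
            exact hP.add_le _ _
        _ < η := max_lt hb1 hb2
    have hfin : nmP (q - Stmt12.piMap g y) = 0 := by
      by_contra hne
      have hpos' : 0 < nmP (q - Stmt12.piMap g y) :=
        lt_of_le_of_ne (hP.nonneg _) (Ne.symm hne)
      exact absurd (hzero' _ hpos') (lt_irrefl _)
    have := (hP.eq_zero_iff _).1 hfin
    rw [sub_eq_zero] at this
    exact this.symm
  -- final assembly
  refine ⟨r₀ / (ε₁ * ρ), by positivity, fun p => ?_⟩
  rcases eq_or_ne p 0 with rfl | hp0
  · refine ⟨0, by simp, fun k => ?_⟩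
    rw [nm_zero hP]
    simp [hv.map_zero]
  · have ht : 0 < nmP p := by
      rcases lt_or_eq_of_le (hP.nonneg p) with h | h
      · exact h
      · exact absurd ((hP.eq_zero_iff p).1 h.symm) hp0
    obtain ⟨b, c, rb, hrb, hbc, hcb, hb, hlow, hhigh⟩ :=
      normalize hv hϖu hϖ1 hϖm (nmP p) ε₁ ht hε₁
    have hqnorm : nmP (b • p) < ε₁ := by
      rw [unit_smul hv hP hbc hcb hb hrb]
      exact hhigh
    obtain ⟨x, hx1, hx2⟩ := hexact (b • p) hqnorm
    refine ⟨fun k => c * x k, ?_, fun k => ?_⟩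
    · have hxe : (fun k => c * x k) = c • x := rfl
      rw [hxe, map_smul, hx2, smul_smul, hcb, one_smul]
    · have e1 : v (x k) = rb * v (c * x k) := by
        have h1 := hb (c * x k)
        rw [← mul_assoc, hbc, one_mul] at h1
        linarith [h1]
      have e2 : v (x k) ≤ r₀ := hx1 k
      have e3 : v (c * x k) * (ε₁ * ρ) ≤ v (c * x k) * (rb * nmP p) :=
        mul_le_mul_of_nonneg_left hlow (hv.nonneg _)
      have e4 : v (c * x k) * (rb * nmP p) = v (x k) * nmP p := by rw [e1]; ring
      have e5 : v (x k) * nmP p ≤ r₀ * nmP p := mul_le_mul_of_nonneg_right e2 (hP.nonneg p)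
      rw [div_mul_eq_mul_div, le_div_iff₀ (by positivity)]
      linarith

end OMT


section Neumann

variable {P : Type*} [AddCommGroup P] [Module A P] {nmP : P → ℝ}

theorem neumann (hP : IsModuleNorm v nmP) (hPc : NormComplete nmP) (w : P →ₗ[A] P)
    {c : ℝ} (hc0 : 0 ≤ c) (hc1 : c < 1) (hw : ∀ p, nmP (w p - p) ≤ c * nmP p) :
    Function.Bijective w := by
  have hwle : ∀ p, nmP (w p) ≤ nmP p := by
    intro p
    have h1 : w p = (w p - p) + p := by abel
    have h2 : nmP (w p) ≤ max (nmP (w p - p)) (nmP p) := by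
      conv_lhs => rw [h1]
      exact hP.add_le _ _
    refine le_trans h2 (max_le ?_ le_rfl)
    calc nmP (w p - p) ≤ c * nmP p := hw p
      _ ≤ 1 * nmP p := mul_le_mul_of_nonneg_right hc1.le (hP.nonneg p)
      _ = nmP p := one_mul _
  constructor
  · have hker : ∀ p, w p = 0 → p = 0 := by
      intro p hp
      have h1 : nmP p ≤ c * nmP p := by
        have h2 := hw p
        rwa [hp, zero_sub, hP.map_neg] at h2
      have h2 : nmP p = 0 := by nlinarith [hP.nonneg p]
      exact (hP.eq_zero_iff p).1 h2
    intro a b hab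
    have h1 : w (a - b) = 0 := by rw [map_sub, hab, sub_self]
    exact sub_eq_zero.1 (hker _ h1)
  · intro y
    let r : ℕ → P := fun m => Nat.rec y (fun _ rr => rr - w rr) m
    have hr : ∀ j, nmP (r j) ≤ c ^ j * nmP y := by
      intro j
      induction j with
      | zero =>
        have h0 : r 0 = y := rfl
        rw [h0, pow_zero, one_mul]
      | succ j ih =>
        have he : r (j+1) = r j - w (r j) := rfl
        rw [he, nm_sub_comm hP]
        calc nmP (w (r j) - r j) ≤ c * nmP (r j) := hw _
          _ ≤ c * (c ^ j * nmP y) := mul_le_mul_of_nonneg_left ih hc0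
          _ = c ^ (j+1) * nmP y := by rw [pow_succ]; ring
    let s : ℕ → P := fun m => ∑ j ∈ Finset.range m, r j
    have hws : ∀ m, w (s m) = y - r m := by
      intro m
      induction m with
      | zero =>
        have h0 : r 0 = y := rfl
        have h1 : s 0 = 0 := rfl
        rw [h0, h1, map_zero, sub_self]
      | succ m ih =>
        have h1 : s (m+1) = s m + r m := Finset.sum_range_succ _ _
        rw [h1, map_add, ih]
        have he : r (m+1) = r m - w (r m) := rfl
        rw [he]
        abel
    have key : ∀ l m, l ≤ m → nmP (s m - s l) ≤ c ^ l * nmP y := by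
      intro l m hlm
      show nmP ((∑ j ∈ Finset.range m, r j) - ∑ j ∈ Finset.range l, r j) ≤ _
      rw [← Finset.sum_Ico_eq_sub _ hlm]
      refine nm_sum_le hP _ _ (mul_nonneg (pow_nonneg hc0 l) (hP.nonneg y)) fun jj hjj => ?_
      calc nmP (r jj) ≤ c ^ jj * nmP y := hr jj
        _ ≤ c ^ l * nmP y := mul_le_mul_of_nonneg_right
            (pow_le_pow_of_le_one hc0 hc1.le (Finset.mem_Ico.1 hjj).1) (hP.nonneg y)
    have hcauchy : NormCauchy nmP s := by
      intro ε hε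
      have hy1 : (0:ℝ) < nmP y + 1 := by linarith [hP.nonneg y]
      obtain ⟨N, hN0⟩ := exists_pow_lt_of_lt_one (div_pos hε hy1) hc1
      have hN : c ^ N * (nmP y + 1) < ε := by
        rw [lt_div_iff₀ hy1] at hN0
        linarith
      refine ⟨N, fun i j hi hj => ?_⟩
      have hbound : ∀ l m, N ≤ l → l ≤ m → nmP (s m - s l) < ε := by
        intro l m hNl hlm
        refine lt_of_le_of_lt (key l m hlm) ?_
        calc c ^ l * nmP y ≤ c ^ N * nmP y := mul_le_mul_of_nonneg_right
              (pow_le_pow_of_le_one hc0 hc1.le hNl) (hP.nonneg y)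
          _ ≤ c ^ N * (nmP y + 1) := by nlinarith [pow_nonneg hc0 N]
          _ < ε := hN
      rcases le_total j i with h | h
      · exact hbound j i hj h
      · rw [nm_sub_comm hP]
        exact hbound i j hi h
    obtain ⟨p, hp⟩ := hPc s hcauchy
    refine ⟨p, ?_⟩
    have hzero : ∀ η, 0 < η → nmP (y - w p) < η := by
      intro η hη
      have hex : ∃ m : ℕ, c ^ m * nmP y < η := by
        rcases eq_or_lt_of_le (hP.nonneg y) with h | h
        · exact ⟨0, by rw [← h]; simpa using hη⟩
        · obtain ⟨m, hm⟩ := exists_pow_lt_of_lt_one (div_pos hη h) hc1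
          exact ⟨m, by rw [lt_div_iff₀ h] at hm; linarith⟩
      obtain ⟨m1, hm1⟩ := hex
      obtain ⟨N, hN⟩ := hp η hη
      set m := max m1 N with hmdef
      have h1 : nmP (y - w (s m)) ≤ c ^ m1 * nmP y := by
        rw [hws m]
        have he : y - (y - r m) = r m := by abel
        rw [he]
        calc nmP (r m) ≤ c ^ m * nmP y := hr m
          _ ≤ c ^ m1 * nmP y := mul_le_mul_of_nonneg_right
              (pow_le_pow_of_le_one hc0 hc1.le (le_max_left _ _)) (hP.nonneg y)
      have h2 : nmP (w (s m) - w p) ≤ nmP (s m - p) := by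
        rw [← map_sub]
        exact hwle _
      have h3 : nmP (s m - p) < η := hN m (le_max_right _ _)
      exact lt_of_le_of_lt (nm_sub_le hP y (w (s m)) (w p))
        (max_lt (lt_of_le_of_lt h1 hm1) (lt_of_le_of_lt h2 h3))
    have hfin : nmP (y - w p) = 0 := by
      by_contra hne
      exact absurd (hzero _ (lt_of_le_of_ne (hP.nonneg _) (Ne.symm hne))) (lt_irrefl _)
    have h4 := (hP.eq_zero_iff _).1 hfin
    rw [sub_eq_zero] at h4
    exact h4.symm

end Neumann


section Split

variable {P M : Type*} [AddCommGroup P] [Module A P] [AddCommGroup M] [Module A M]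

theorem exists_padded_gens [Module.Finite A P] :
    ∃ (n : ℕ) (g : Fin (n+1) → P), ∀ p, ∃ x : Fin (n+1) → A, Stmt12.piMap g x = p := by
  obtain ⟨n0, g0, hspan⟩ := Module.Finite.exists_fin (R := A) (M := P)
  refine ⟨n0, Fin.snoc g0 0, fun p => ?_⟩
  have hp : p ∈ Submodule.span A (Set.range g0) := by rw [hspan]; trivial
  obtain ⟨x0, hx0⟩ := (Submodule.mem_span_range_iff_exists_fun A).1 hp
  refine ⟨Fin.snoc x0 0, ?_⟩
  rw [piMap_apply, Fin.sum_univ_castSucc]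
  simp only [Fin.snoc_castSucc, Fin.snoc_last, zero_smul, add_zero]
  exact hx0

/-- The splitting `P × ker(s∘φ) ≅ M` given by a section `s` of `φ`. -/
noncomputable def splitEquiv (φ : M →ₗ[A] P) (s : P →ₗ[A] M) (h : ∀ p, φ (s p) = p) :
    (P × ↥(LinearMap.ker (s ∘ₗ φ))) ≃ₗ[A] M where
  toFun x := s x.1 + x.2.1
  map_add' x y := by
    simp only [Prod.fst_add, map_add, Submodule.coe_add, Prod.snd_add]
    abel
  map_smul' a x := by
    simp only [Prod.smul_fst, map_smul, RingHom.id_apply, Prod.smul_snd,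
      Submodule.coe_smul, smul_add]
  invFun m := (φ m, ⟨m - (s ∘ₗ φ) m, by
    simp only [LinearMap.mem_ker, map_sub, LinearMap.comp_apply]
    rw [h (φ m), sub_self]⟩)
  left_inv x := by
    obtain ⟨p, q⟩ := x
    have hq : s (φ q.1) = 0 := q.2
    have hφq : φ q.1 = 0 := by
      have h1 : φ (s (φ q.1)) = φ q.1 := h (φ q.1)
      rw [hq, map_zero] at h1
      exact h1.symm
    have h2 : φ (s p + q.1) = p := by rw [map_add, h p, hφq, add_zero]
    refine Prod.ext ?_ (Subtype.ext ?_)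
    · exact h2
    · show s p + q.1 - s (φ (s p + q.1)) = q.1
      rw [h2]
      abel
  right_inv m := by
    show s (φ m) + (m - s (φ m)) = m
    abel

end Split

section FinJ

variable (hv : IsRingNorm v)

/-- The tautological identification of `Fin m → A` with `c_A(ULift (Fin m))`. -/
def finJ (m : ℕ) : (Fin m → A) ≃ₗ[A] cA v hv (ULift.{u} (Fin m)) where
  toFun x := ⟨fun i => x i.down, fun ε hε => Set.toFinite _⟩
  invFun f k := (f : ULift.{u} (Fin m) → A) ⟨k⟩
  left_inv x := rfl
  right_inv f := by
    apply Subtype.ext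
    funext i
    cases i
    rfl
  map_add' x y := rfl
  map_smul' a x := rfl

theorem finJ_coe (m : ℕ) (x : Fin m → A) (i : ULift.{u} (Fin m)) :
    ((finJ hv m x : cA v hv (ULift.{u} (Fin m))) : ULift.{u} (Fin m) → A) i = x i.down := rfl

/-- The sup norm on `Fin m → A`, via `cNorm`. -/
noncomputable def nmF (m : ℕ) : (Fin m → A) → ℝ := fun x => cNorm v (finJ hv m x)

theorem le_nmF (m : ℕ) (x : Fin m → A) (k : Fin m) : v (x k) ≤ nmF hv m x :=
  le_cNorm (finJ hv m x) ⟨k⟩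

theorem nmF_le (m : ℕ) (x : Fin m → A) {B : ℝ} (hB : 0 ≤ B) (h : ∀ k, v (x k) ≤ B) :
    nmF hv m x ≤ B :=
  cNorm_le _ hB fun i => h i.down

theorem nmF_isModuleNorm (m : ℕ) : IsModuleNorm v (nmF hv m) where
  nonneg x := cNorm_nonneg hv _
  eq_zero_iff x := by
    unfold nmF
    rw [(cNorm_isModuleNorm hv).eq_zero_iff]
    exact (finJ hv m).map_eq_zero_iff
  map_neg x := by
    unfold nmF
    rw [map_neg]
    exact (cNorm_isModuleNorm hv).map_neg _
  add_le x y := by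
    unfold nmF
    rw [map_add]
    exact (cNorm_isModuleNorm hv).add_le _ _
  smul_le a x := by
    unfold nmF
    rw [map_smul]
    exact (cNorm_isModuleNorm hv).smul_le _ _

theorem nmF_complete (hAc : NormComplete v) (m : ℕ) : NormComplete (nmF hv m) := by
  intro s hs
  have hcoord : ∀ k : Fin m, ∃ y : A, NormLim v (fun i => s i k) y := by
    intro k
    apply hAc
    intro ε hε
    obtain ⟨N, hN⟩ := hs ε hε
    refine ⟨N, fun i j hi hj => ?_⟩
    have h1 : s i k - s j k = (s i - s j) k := rfl
    rw [h1]
    exact lt_of_le_of_lt (le_nmF hv m _ k) (hN i j hi hj)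
  choose y hy using hcoord
  refine ⟨y, ?_⟩
  intro ε hε
  have h2 : ∀ k : Fin m, ∃ N, ∀ i, N ≤ i → v (s i k - y k) < ε / 2 := fun k =>
    hy k (ε/2) (by linarith)
  choose Nk hNk using h2
  refine ⟨Finset.univ.sup Nk, fun i hi => ?_⟩
  have h3 : nmF hv m (s i - y) ≤ ε / 2 := by
    refine nmF_le hv m _ (by linarith) fun k => ?_
    have h4 : (s i - y) k = s i k - y k := rfl
    rw [h4]
    exact (hNk k i (le_trans (Finset.le_sup (Finset.mem_univ k)) hi)).le
  linarith

end FinJ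


section Retract

variable (hv : IsRingNorm v) {I : Type v}

/-- Extension by zero from coordinates in `S` into `c_A(I)`. -/
noncomputable def extMap (S : Finset I) : ({i // i ∈ S} → A) →ₗ[A] cA v hv I where
  toFun x := ⟨fun i => if h : i ∈ S then x ⟨i, h⟩ else 0, by
    intro ε hε
    refine S.finite_toSet.subset ?_
    intro i hi
    simp only [Set.mem_setOf_eq] at hi
    rw [Finset.mem_coe]
    by_contra hiS
    rw [dif_neg hiS, IsRingNorm.map_zero hv] at hi
    exact absurd hi (not_lt.mpr hε.le)⟩
  map_add' x y := by
    apply Subtype.ext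
    funext i
    show (if h : i ∈ S then (x + y) ⟨i, h⟩ else 0)
      = (if h : i ∈ S then x ⟨i, h⟩ else 0) + (if h : i ∈ S then y ⟨i, h⟩ else 0)
    by_cases h : i ∈ S <;> simp [h]
  map_smul' a x := by
    apply Subtype.ext
    funext i
    show (if h : i ∈ S then (a • x) ⟨i, h⟩ else 0)
      = a * (if h : i ∈ S then x ⟨i, h⟩ else 0)
    by_cases h : i ∈ S <;> simp [h]

/-- Restriction of coordinates to `S`. -/
noncomputable def restrMap (S : Finset I) {M : Type*} [AddCommGroup M] [Module A M]
    (L : M →ₗ[A] cA v hv I) : M →ₗ[A] ({i // i ∈ S} → A) where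
  toFun m i := ((L m : cA v hv I) : I → A) i.1
  map_add' m m' := by
    funext i
    show ((L (m + m') : cA v hv I) : I → A) i.1
      = ((L m : cA v hv I) : I → A) i.1 + ((L m' : cA v hv I) : I → A) i.1
    rw [map_add]
    rfl
  map_smul' a m := by
    funext i
    show ((L (a • m) : cA v hv I) : I → A) i.1 = a * ((L m : cA v hv I) : I → A) i.1
    rw [map_smul]
    rfl

theorem extMap_restr (S : Finset I) {M : Type*} [AddCommGroup M] [Module A M]
    (L : M →ₗ[A] cA v hv I) (m : M) :
    extMap hv S (restrMap hv S L m) = projCA v hv S (L m) := by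
  apply Subtype.ext
  funext i
  show (if h : i ∈ S then ((L m : cA v hv I) : I → A) i else 0)
    = (if i ∈ S then ((L m : cA v hv I) : I → A) i else 0)
  by_cases h : i ∈ S
  · rw [dif_pos h, if_pos h]
  · rw [dif_neg h, if_neg h]

end Retract

end Stmt12

/-- A finite Banach module over a Banach–Tate ring has property (Pr)
if and only if it is projective as an abstract `A`-module. -/
theorem hasPr_iff_projective_of_finite
    {A : Type u} [Ring A] (v : A → ℝ) (hA : IsBanachTate v)
    {P : Type u} [AddCommGroup P] [Module A P] (nmP : P → ℝ)
    (hP : IsModuleNorm v nmP) (hPc : NormComplete nmP)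
    (hfin : Module.Finite A P) :
    HasPr v hA.isRingNorm nmP ↔ Module.Projective A P := by
  classical
  obtain ⟨ϖ, hϖu, hϖ1, hϖm⟩ := hA.exists_unit
  have hv : IsRingNorm v := hA.isRingNorm
  obtain ⟨n, g, hg⟩ := Stmt12.exists_padded_gens (A := A) (P := P)
  obtain ⟨C, hC0, hC⟩ := Stmt12.omt hv hϖu hϖ1 hϖm hA.complete hP hPc g hg
  constructor
  · -- HasPr → Projective
    rintro ⟨Q, I, T, hTc, hTsc⟩
    have hQ : IsModuleNorm v Q.nm := Q.isNorm
    have hPr : IsModuleNorm v (prodNorm nmP Q.nm) := Stmt12.prod_isModuleNorm hv hP hQ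
    have hcN : IsModuleNorm v (cNorm v (hv := hA.isRingNorm) (I := I)) :=
      Stmt12.cNorm_isModuleNorm hv
    obtain ⟨CT, hCT0, hCT⟩ := Stmt12.bdd_of_cont hv hϖu hϖ1 hϖm hPr hcN T.toLinearMap hTc
    obtain ⟨CS, hCS0, hCS⟩ := Stmt12.bdd_of_cont hv hϖu hϖ1 hϖm hcN hPr T.symm.toLinearMap hTsc
    set εS : ℝ := 1 / (2 * CS * C) with hεSdef
    have hεS : 0 < εS := by positivity
    set mv : Fin (n+1) → ↥(cA v hA.isRingNorm I) := fun k => T (g k, 0) with hmv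
    set S : Finset I := Finset.univ.biUnion
      (fun k => ((mv k).2 εS hεS).toFinset) with hSdef
    have happrox : ∀ k, cNorm v ((mv k) - projCA v hA.isRingNorm S (mv k)) ≤ εS := by
      intro k
      refine Stmt12.cNorm_sub_projCA hv S (mv k) hεS.le ?_
      intro i hi
      exact Finset.mem_coe.2 (Finset.mem_biUnion.2
        ⟨k, Finset.mem_univ k, (Set.Finite.mem_toFinset _).2 hi⟩)
    set w : P →ₗ[A] P := LinearMap.fst A P Q.carrier ∘ₗ T.symm.toLinearMap ∘ₗ
      projCA v hA.isRingNorm S ∘ₗ T.toLinearMap ∘ₗ LinearMap.inl A P Q.carrier with hwdef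
    have hw : ∀ p, nmP (w p - p) ≤ (1/2 : ℝ) * nmP p := by
      intro p
      obtain ⟨x, hx1, hx2⟩ := hC p
      have h1 : ((p, (0 : Q.carrier)) : P × Q.carrier)
          = ∑ k, x k • ((g k, (0 : Q.carrier)) : P × Q.carrier) := by
        have h2 := congrArg (LinearMap.inl A P Q.carrier) hx1
        rw [Stmt12.piMap_apply, map_sum] at h2
        simp only [map_smul, LinearMap.inl_apply] at h2
        exact h2.symm
      have hz : T (p, (0 : Q.carrier)) = ∑ k, x k • mv k := by
        rw [h1, map_sum]
        simp only [map_smul, hmv]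
      have hdiff : T (p, (0 : Q.carrier)) - projCA v hA.isRingNorm S (T (p, (0 : Q.carrier)))
          = ∑ k, x k • (mv k - projCA v hA.isRingNorm S (mv k)) := by
        rw [hz, map_sum, ← Finset.sum_sub_distrib]
        refine Finset.sum_congr rfl fun k _ => ?_
        rw [map_smul, smul_sub]
      have hcnorm : cNorm v (T (p, (0 : Q.carrier))
          - projCA v hA.isRingNorm S (T (p, (0 : Q.carrier)))) ≤ (C * nmP p) * εS := by
        rw [hdiff]
        refine Stmt12.nm_sum_le hcN _ _
          (mul_nonneg (mul_nonneg hC0.le (hP.nonneg p)) hεS.le) fun k _ => ?_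
        refine le_trans (hcN.smul_le _ _) ?_
        exact mul_le_mul (hx2 k) (happrox k) (Stmt12.cNorm_nonneg hv _)
          (mul_nonneg hC0.le (hP.nonneg p))
      have hkey : w p - p = (T.symm (projCA v hA.isRingNorm S (T (p, (0 : Q.carrier)))
          - T (p, (0 : Q.carrier)))).1 := by
        rw [map_sub]
        have h4 : w p = (T.symm (projCA v hA.isRingNorm S (T (p, (0 : Q.carrier))))).1 := rfl
        have h3 : (T.symm (T (p, (0 : Q.carrier)))).1 = p := by rw [T.symm_apply_apply]
        rw [Prod.fst_sub, h4, h3]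
      calc nmP (w p - p)
          = nmP ((T.symm (projCA v hA.isRingNorm S (T (p, (0 : Q.carrier)))
              - T (p, (0 : Q.carrier)))).1) := by rw [hkey]
        _ ≤ prodNorm nmP Q.nm (T.symm (projCA v hA.isRingNorm S (T (p, (0 : Q.carrier)))
              - T (p, (0 : Q.carrier)))) := le_max_left _ _
        _ ≤ CS * cNorm v (projCA v hA.isRingNorm S (T (p, (0 : Q.carrier)))
              - T (p, (0 : Q.carrier))) := hCS _
        _ = CS * cNorm v (T (p, (0 : Q.carrier))
              - projCA v hA.isRingNorm S (T (p, (0 : Q.carrier)))) := by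
              rw [Stmt12.nm_sub_comm hcN]
        _ ≤ CS * ((C * nmP p) * εS) := mul_le_mul_of_nonneg_left hcnorm hCS0.le
        _ = (CS * C * εS) * nmP p := by ring
        _ = (1/2 : ℝ) * nmP p := by
              rw [hεSdef]
              field_simp
    have hbij := Stmt12.neumann hP hPc w (by norm_num : (0:ℝ) ≤ 1/2)
      (by norm_num : (1:ℝ)/2 < 1) hw
    set weq := LinearEquiv.ofBijective w hbij with hweqdef
    set α : P →ₗ[A] ({i // i ∈ S} → A) := Stmt12.restrMap hA.isRingNorm S
      (T.toLinearMap ∘ₗ LinearMap.inl A P Q.carrier) with hαdef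
    set ext : ({i // i ∈ S} → A) →ₗ[A] ↥(cA v hA.isRingNorm I) :=
      Stmt12.extMap hA.isRingNorm S with hextdef
    have hextα : ∀ p, ext (α p) = projCA v hA.isRingNorm S (T (p, (0 : Q.carrier))) := by
      intro p
      exact Stmt12.extMap_restr hA.isRingNorm S (T.toLinearMap ∘ₗ LinearMap.inl A P Q.carrier) p
    let β : ({i // i ∈ S} → A) →ₗ[A] P := weq.symm.toLinearMap ∘ₗ LinearMap.fst A P Q.carrier ∘ₗ
      T.symm.toLinearMap ∘ₗ ext
    have hsplit : β ∘ₗ α = LinearMap.id := by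
      apply LinearMap.ext
      intro p
      show weq.symm ((T.symm (ext (α p))).1) = p
      rw [hextα p]
      exact weq.symm_apply_apply p
    exact Module.Projective.of_split α β hsplit
  · -- Projective → HasPr
    intro hproj
    have hsurj : Function.Surjective (Stmt12.piMap g) := fun p => hg p
    obtain ⟨s, hs⟩ := Module.projective_lifting_property (Stmt12.piMap g) LinearMap.id hsurj
    have hφs : ∀ p, Stmt12.piMap g (s p) = p := fun p => by
      have h1 := LinearMap.ext_iff.1 hs p
      simpa using h1
    have hnF : IsModuleNorm v (Stmt12.nmF hA.isRingNorm (n+1)) :=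
      Stmt12.nmF_isModuleNorm hA.isRingNorm (n+1)
    set e : (Fin (n+1) → A) →ₗ[A] (Fin (n+1) → A) := s ∘ₗ Stmt12.piMap g with hedef
    obtain ⟨Ce, hCe0, hCe⟩ := Stmt12.bdd_from_pi hv hnF e
    obtain ⟨Cφ, hCφ0, hCφ⟩ := Stmt12.bdd_from_pi hv hP (Stmt12.piMap g)
    set Qsub : Submodule A (Fin (n+1) → A) := LinearMap.ker e with hQsubdef
    set nmQ : ↥Qsub → ℝ := fun q => Stmt12.nmF hA.isRingNorm (n+1) q.1 with hnmQdef
    have hQnorm : IsModuleNorm v nmQ :=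
      { nonneg := fun q => hnF.nonneg _
        eq_zero_iff := fun q => by
          show Stmt12.nmF hA.isRingNorm (n+1) q.1 = 0 ↔ _
          rw [hnF.eq_zero_iff]
          exact ⟨fun h => Subtype.ext h, fun h => by rw [h]; rfl⟩
        map_neg := fun q => hnF.map_neg _
        add_le := fun q q' => hnF.add_le _ _
        smul_le := fun a q => hnF.smul_le _ _ }
    have hQcomplete : NormComplete nmQ := by
      intro sq hsq
      have hc : NormCauchy (Stmt12.nmF hA.isRingNorm (n+1)) (fun i => (sq i).1) := by
        intro ε hε
        obtain ⟨N, hN⟩ := hsq ε hε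
        exact ⟨N, fun i j hi hj => hN i j hi hj⟩
      obtain ⟨x, hx⟩ := Stmt12.nmF_complete hA.isRingNorm hA.complete (n+1) _ hc
      have hexzero : ∀ η, 0 < η → Stmt12.nmF hA.isRingNorm (n+1) (e x) < η := by
        intro η hη
        obtain ⟨N, hN⟩ := hx (η / Ce) (by positivity)
        have h1 : e x = e (x - (sq N).1) := by
          rw [map_sub]
          have h2 : e (sq N).1 = 0 := (sq N).2
          rw [h2, sub_zero]
        rw [h1]
        have h3 := hCe (x - (sq N).1) (Stmt12.nmF hA.isRingNorm (n+1) (x - (sq N).1))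
          (hnF.nonneg _) (fun k => Stmt12.le_nmF _ _ _ k)
        have h4 : Stmt12.nmF hA.isRingNorm (n+1) (x - (sq N).1) < η / Ce := by
          rw [Stmt12.nm_sub_comm hnF]
          exact hN N le_rfl
        calc Stmt12.nmF hA.isRingNorm (n+1) (e (x - (sq N).1))
            ≤ Ce * Stmt12.nmF hA.isRingNorm (n+1) (x - (sq N).1) := h3
          _ < Ce * (η / Ce) := mul_lt_mul_of_pos_left h4 hCe0
          _ = η := by field_simp
      have hxker : x ∈ Qsub := by
        show e x = 0
        rw [← hnF.eq_zero_iff]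
        by_contra hne
        exact absurd (hexzero _ (lt_of_le_of_ne (hnF.nonneg _) (Ne.symm hne))) (lt_irrefl _)
      refine ⟨⟨x, hxker⟩, ?_⟩
      intro ε hε
      obtain ⟨N, hN⟩ := hx ε hε
      exact ⟨N, fun i hi => hN i hi⟩
    set G := Stmt12.splitEquiv (Stmt12.piMap g) s hφs with hGdef
    set J := Stmt12.finJ (v := v) hA.isRingNorm (n+1) with hJdef
    set T : (P × ↥Qsub) ≃ₗ[A] ↥(cA v hA.isRingNorm (ULift.{u} (Fin (n+1)))) :=
      G ≪≫ₗ J with hTdef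
    have hcN : IsModuleNorm v (cNorm v (hv := hA.isRingNorm) (I := ULift.{u} (Fin (n+1)))) :=
      Stmt12.cNorm_isModuleNorm hv
    have hPrn : IsModuleNorm v (prodNorm nmP nmQ) := Stmt12.prod_isModuleNorm hv hP hQnorm
    have hTbdd : Stmt12.Bdd (prodNorm nmP nmQ) (cNorm v) ⇑T := by
      refine ⟨Ce * C + 1, by positivity, ?_⟩
      rintro ⟨p, q⟩
      have h1 : cNorm v (T (p, q)) = Stmt12.nmF hA.isRingNorm (n+1) (s p + q.1) := rfl
      rw [h1]
      have h2 : Stmt12.nmF hA.isRingNorm (n+1) (s p + q.1) ≤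
          max (Stmt12.nmF hA.isRingNorm (n+1) (s p)) (Stmt12.nmF hA.isRingNorm (n+1) q.1) :=
        hnF.add_le _ _
      obtain ⟨x, hx1, hx2⟩ := hC p
      have h3 : s p = e x := by
        show s p = s (Stmt12.piMap g x)
        rw [hx1]
      have h4 : Stmt12.nmF hA.isRingNorm (n+1) (s p) ≤ Ce * (C * nmP p) := by
        rw [h3]
        exact hCe x (C * nmP p) (mul_nonneg hC0.le (hP.nonneg p)) hx2
      have h5 : nmP p ≤ prodNorm nmP nmQ (p, q) := le_max_left _ _
      have h6 : nmQ q ≤ prodNorm nmP nmQ (p, q) := le_max_right _ _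
      have h7 : 0 ≤ prodNorm nmP nmQ (p, q) := hPrn.nonneg _
      refine le_trans h2 (max_le ?_ ?_)
      · calc Stmt12.nmF hA.isRingNorm (n+1) (s p) ≤ Ce * (C * nmP p) := h4
          _ ≤ Ce * C * prodNorm nmP nmQ (p, q) := by
              nlinarith [mul_le_mul_of_nonneg_left h5 (mul_nonneg hCe0.le hC0.le)]
          _ ≤ (Ce * C + 1) * prodNorm nmP nmQ (p, q) := by nlinarith
      · calc Stmt12.nmF hA.isRingNorm (n+1) q.1 = nmQ q := rfl
          _ ≤ prodNorm nmP nmQ (p, q) := h6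
          _ ≤ (Ce * C + 1) * prodNorm nmP nmQ (p, q) := by
              nlinarith [mul_nonneg (mul_nonneg hCe0.le hC0.le) h7]
    have hTsbdd : Stmt12.Bdd (cNorm v) (prodNorm nmP nmQ) ⇑T.symm := by
      refine ⟨Cφ + Ce + 1, by positivity, fun f => ?_⟩
      set x : Fin (n+1) → A := J.symm f with hxdef
      have h1 : T.symm f = G.symm x := rfl
      have hxn : Stmt12.nmF hA.isRingNorm (n+1) x = cNorm v f := by
        show cNorm v (J (J.symm f)) = cNorm v f
        rw [LinearEquiv.apply_symm_apply]
      have h2 : prodNorm nmP nmQ (T.symm f)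
          = max (nmP (Stmt12.piMap g x)) (Stmt12.nmF hA.isRingNorm (n+1) (x - e x)) := rfl
      rw [h2]
      have h3 : nmP (Stmt12.piMap g x) ≤ Cφ * Stmt12.nmF hA.isRingNorm (n+1) x :=
        hCφ x _ (hnF.nonneg x) (fun k => Stmt12.le_nmF _ _ _ k)
      have h4 : Stmt12.nmF hA.isRingNorm (n+1) (e x) ≤ Ce * Stmt12.nmF hA.isRingNorm (n+1) x :=
        hCe x _ (hnF.nonneg x) (fun k => Stmt12.le_nmF _ _ _ k)
      have h5 : Stmt12.nmF hA.isRingNorm (n+1) (x - e x) ≤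
          max (Stmt12.nmF hA.isRingNorm (n+1) x) (Stmt12.nmF hA.isRingNorm (n+1) (e x)) :=
        Stmt12.nm_sub_le' hnF _ _
      have h6 : 0 ≤ Stmt12.nmF hA.isRingNorm (n+1) x := hnF.nonneg x
      refine max_le ?_ ?_
      · rw [← hxn]; nlinarith
      · rw [← hxn]
        have h9 : Stmt12.nmF hA.isRingNorm (n+1) (x - e x) ≤
            (Ce + 1) * Stmt12.nmF hA.isRingNorm (n+1) x := by
          refine le_trans h5 (max_le ?_ ?_) <;> nlinarith
        nlinarith
    refine ⟨⟨↥Qsub, nmQ, hQnorm, hQcomplete⟩, ULift.{u} (Fin (n+1)), T, ?_, ?_⟩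
    · exact Stmt12.cont_of_bdd hPrn hcN T.toLinearMap hTbdd
    · exact Stmt12.cont_of_bdd hcN hPrn T.symm.toLinearMap hTsbdd
end
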